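/- In the bounded-coordination meta-game, consider the following profile of meta-actions. The large LLM draws x uniformly from {1,…,100} and plays the role-homogeneous pure meta-action instructing roles 1,2,3,4 to play x and role 5 to play x+1 (cyclically, i.e., 101 is identified with 1). The medium LLM draws y uniformly from {1,…,100} and instructs roles 6,7,8,9 to play y. The small LLM draws z uniformly from {1,…,100} and instructs role 10 to play z. Then this profile is a Nash equilibrium of the one-shot meta-game, and the average utilities are Ū^{large} = 9.998, Ū^{medium} = 12.25, and Ū^{small} = 0. In particular, the medium LLM obtains the highest average utility, although it does not have the largest market share. -/

import Mathlib

open Finset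

namespace MetaGame

/-- A mixed action over a finite action set: a probability vector. -/
def Mixed (α : Type) [Fintype α] : Type :=
  {f : α → ℝ // (∀ a, 0 ≤ f a) ∧ ∑ a, f a = 1}

/-- The point-mass (Dirac) mixed action on `a`. -/
noncomputable def Mixed.dirac {α : Type} [Fintype α] [DecidableEq α] (a : α) : Mixed α :=
  ⟨fun b => if b = a then 1 else 0,
    fun b => by by_cases h : b = a <;> simp [h],
    by simp⟩

/-- A finitely supported probability distribution on `α`. -/
structure FinDist (α : Type) where
  support : Finset α
  w : α → ℝ
  nonneg : ∀ x, 0 ≤ w x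
  sum_one : ∑ x ∈ support, w x = 1
  zero_of_not_mem : ∀ x, x ∉ support → w x = 0

/-- The point mass distribution on `x`. -/
noncomputable def FinDist.pure {α : Type} (x : α) : FinDist α := by
  classical
  exact
    { support := {x}
      w := fun y => if y = x then 1 else 0
      nonneg := fun y => by by_cases h : y = x <;> simp [h]
      sum_one := by simp
      zero_of_not_mem := fun y hy => by
        simp only [Finset.mem_singleton] at hy
        simp [hy] }

variable {m k : ℕ} {A : Fin m → Type} [∀ i, Fintype (A i)] [∀ i, DecidableEq (A i)]

/-- Multilinear extension of a payoff function to profiles of mixed actions. -/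
noncomputable def expPay (u : (∀ r : Fin m, A r) → ℝ) (σ : ∀ r, Mixed (A r)) : ℝ :=
  ∑ a : ∀ r : Fin m, A r, (∏ r, (σ r).1 (a r)) * u a

/-- A pure meta-action: a mixed action for each role. -/
abbrev PureMeta (A : Fin m → Type) [∀ i, Fintype (A i)] : Type := ∀ i, Mixed (A i)

/-- The role-homogeneous pure meta-action instructing pure action `a i` in each role `i`. -/
noncomputable def diracProfile (a : ∀ i : Fin m, A i) : PureMeta A := fun i => Mixed.dirac (a i)

/-- Utility of LLM `j` under a profile of pure meta-actions. -/
noncomputable def Upure (u : ∀ i : Fin m, (∀ r : Fin m, A r) → ℝ) (p : Fin m → Fin k → ℝ)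
    (j : Fin k) (M : Fin k → PureMeta A) : ℝ :=
  ∑ i, ∑ g : Fin m → Fin k,
    if g i = j then (∏ r, p r (g r)) * expPay (u i) (fun r => M (g r) r) else 0

/-- Utility of LLM `j` under a profile of (finitely supported, independent) meta-actions. -/
noncomputable def U (u : ∀ i : Fin m, (∀ r : Fin m, A r) → ℝ) (p : Fin m → Fin k → ℝ)
    (Γ : Fin k → FinDist (PureMeta A)) (j : Fin k) : ℝ :=
  ∑ M ∈ Fintype.piFinset (fun j' => (Γ j').support),
    (∏ j', (Γ j').w (M j')) * Upure u p j M

/-- Nash equilibrium of the one-shot meta-game. -/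
def Nash (u : ∀ i : Fin m, (∀ r : Fin m, A r) → ℝ) (p : Fin m → Fin k → ℝ)
    (Γ : Fin k → FinDist (PureMeta A)) : Prop :=
  ∀ (j : Fin k) (Γ' : FinDist (PureMeta A)),
    U u p (Function.update Γ j Γ') j ≤ U u p Γ j

/-- Average utility of the clients governed by LLM `j`. -/
noncomputable def avgU (u : ∀ i : Fin m, (∀ r : Fin m, A r) → ℝ) (p : Fin m → Fin k → ℝ)
    (Γ : Fin k → FinDist (PureMeta A)) (j : Fin k) : ℝ :=
  U u p Γ j / ∑ i, p i j

/-- A meta-action is role-homogeneous if every pure meta-action in its support is a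
tuple of point-mass mixed actions. -/
def RoleHomogeneous (Γ : FinDist (PureMeta A)) : Prop :=
  ∀ M ∈ Γ.support, ∃ a : ∀ i : Fin m, A i, M = diracProfile a


/-- Bounded-coordination payoffs with ten roles and actions `{1,…,100}` (encoded as `Fin 100`):
`W` is the set of roles whose action is chosen by exactly four roles; if `W ≠ ∅` the prize `100`
is split equally among the roles of `W`, otherwise every role receives `0`. -/
noncomputable def bcu (i : Fin 10) (a : ∀ _ : Fin 10, Fin 100) : ℝ :=
  let W : Finset (Fin 10) :=
    Finset.univ.filter (fun r => (Finset.univ.filter (fun r' => a r' = a r)).card = 4)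
  if i ∈ W then 100 / (W.card : ℝ) else 0

/-- Client shares in the bounded-coordination meta-game: the large LLM (`0`) governs all clients
of roles `1,…,5`, the medium LLM (`1`) those of roles `6,…,9`, and the small LLM (`2`) those of
role `10` (roles are `0`-indexed in the formalization). -/
def bcp : Fin 10 → Fin 3 → ℝ := fun i j =>
  if j = 0 then (if (i : ℕ) ≤ 4 then 1 else 0)
  else if j = 1 then (if 5 ≤ (i : ℕ) ∧ (i : ℕ) ≤ 8 then 1 else 0)
  else (if (i : ℕ) = 9 then 1 else 0)

/-- The pure meta-action of the large LLM when it draws `x`: roles `1,…,4` play `x` and role `5`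
plays `x+1` (cyclically). -/
noncomputable def largePure (x : Fin 100) : PureMeta (fun _ : Fin 10 => Fin 100) :=
  fun i => if (i : ℕ) = 4 then Mixed.dirac (x + 1) else Mixed.dirac x

/-- The pure meta-action instructing every role to play `x`. -/
noncomputable def constPure (x : Fin 100) : PureMeta (fun _ : Fin 10 => Fin 100) :=
  fun _ => Mixed.dirac x

set_option maxRecDepth 10000

lemma sum_univ_ten {M : Type} [AddCommMonoid M] (f : Fin 10 → M) :
    ∑ i, f i = f 0 + f 1 + f 2 + f 3 + f 4 + f 5 + f 6 + f 7 + f 8 + f 9 := by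
  have : ∑ i, f i = f 0 + (f 1 + (f 2 + (f 3 + (f 4 + (f 5 + (f 6 + (f 7 + (f 8 + (f 9 + 0))))))))) := rfl
  rw [this]; abel

def pat (a0 a1 a2 a3 a4 a5 a6 a7 a8 a9 : Fin 100) : Fin 10 → Fin 100 :=
  ![a0,a1,a2,a3,a4,a5,a6,a7,a8,a9]

@[simp] lemma pat0 (a0 a1 a2 a3 a4 a5 a6 a7 a8 a9 : Fin 100) : pat a0 a1 a2 a3 a4 a5 a6 a7 a8 a9 0 = a0 := rfl
@[simp] lemma pat1 (a0 a1 a2 a3 a4 a5 a6 a7 a8 a9 : Fin 100) : pat a0 a1 a2 a3 a4 a5 a6 a7 a8 a9 1 = a1 := rfl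
@[simp] lemma pat2 (a0 a1 a2 a3 a4 a5 a6 a7 a8 a9 : Fin 100) : pat a0 a1 a2 a3 a4 a5 a6 a7 a8 a9 2 = a2 := rfl
@[simp] lemma pat3 (a0 a1 a2 a3 a4 a5 a6 a7 a8 a9 : Fin 100) : pat a0 a1 a2 a3 a4 a5 a6 a7 a8 a9 3 = a3 := rfl
@[simp] lemma pat4 (a0 a1 a2 a3 a4 a5 a6 a7 a8 a9 : Fin 100) : pat a0 a1 a2 a3 a4 a5 a6 a7 a8 a9 4 = a4 := rfl
@[simp] lemma pat5 (a0 a1 a2 a3 a4 a5 a6 a7 a8 a9 : Fin 100) : pat a0 a1 a2 a3 a4 a5 a6 a7 a8 a9 5 = a5 := rfl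
@[simp] lemma pat6 (a0 a1 a2 a3 a4 a5 a6 a7 a8 a9 : Fin 100) : pat a0 a1 a2 a3 a4 a5 a6 a7 a8 a9 6 = a6 := rfl
@[simp] lemma pat7 (a0 a1 a2 a3 a4 a5 a6 a7 a8 a9 : Fin 100) : pat a0 a1 a2 a3 a4 a5 a6 a7 a8 a9 7 = a7 := rfl
@[simp] lemma pat8 (a0 a1 a2 a3 a4 a5 a6 a7 a8 a9 : Fin 100) : pat a0 a1 a2 a3 a4 a5 a6 a7 a8 a9 8 = a8 := rfl
@[simp] lemma pat9 (a0 a1 a2 a3 a4 a5 a6 a7 a8 a9 : Fin 100) : pat a0 a1 a2 a3 a4 a5 a6 a7 a8 a9 9 = a9 := rfl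

def cnt (a : Fin 10 → Fin 100) (v : Fin 100) : ℕ := (univ.filter fun r => a r = v).card

def Wset (a : Fin 10 → Fin 100) : Finset (Fin 10) := univ.filter fun r => cnt a (a r) = 4

lemma bcu_eq (i : Fin 10) (a : Fin 10 → Fin 100) :
    bcu i a = if cnt a (a i) = 4 then (100 : ℝ) / ((Wset a).card : ℝ) else 0 := by
  unfold bcu Wset cnt
  by_cases h : (univ.filter fun r' => a r' = a i).card = 4 <;> simp [h]

lemma cnt_pat (a0 a1 a2 a3 a4 a5 a6 a7 a8 a9 v : Fin 100) :
    cnt (pat a0 a1 a2 a3 a4 a5 a6 a7 a8 a9) v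
    = (if a0 = v then 1 else 0) + (if a1 = v then 1 else 0) + (if a2 = v then 1 else 0)
    + (if a3 = v then 1 else 0) + (if a4 = v then 1 else 0) + (if a5 = v then 1 else 0)
    + (if a6 = v then 1 else 0) + (if a7 = v then 1 else 0) + (if a8 = v then 1 else 0)
    + (if a9 = v then 1 else 0) := by
  rw [cnt, Finset.card_filter, sum_univ_ten]
  simp only [pat0, pat1, pat2, pat3, pat4, pat5, pat6, pat7, pat8, pat9]
  rfl

lemma Wcard_pat (a0 a1 a2 a3 a4 a5 a6 a7 a8 a9 : Fin 100) :
    ((Wset (pat a0 a1 a2 a3 a4 a5 a6 a7 a8 a9)).card : ℕ)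
    = (if cnt (pat a0 a1 a2 a3 a4 a5 a6 a7 a8 a9) a0 = 4 then 1 else 0)
    + (if cnt (pat a0 a1 a2 a3 a4 a5 a6 a7 a8 a9) a1 = 4 then 1 else 0)
    + (if cnt (pat a0 a1 a2 a3 a4 a5 a6 a7 a8 a9) a2 = 4 then 1 else 0)
    + (if cnt (pat a0 a1 a2 a3 a4 a5 a6 a7 a8 a9) a3 = 4 then 1 else 0)
    + (if cnt (pat a0 a1 a2 a3 a4 a5 a6 a7 a8 a9) a4 = 4 then 1 else 0)
    + (if cnt (pat a0 a1 a2 a3 a4 a5 a6 a7 a8 a9) a5 = 4 then 1 else 0)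
    + (if cnt (pat a0 a1 a2 a3 a4 a5 a6 a7 a8 a9) a6 = 4 then 1 else 0)
    + (if cnt (pat a0 a1 a2 a3 a4 a5 a6 a7 a8 a9) a7 = 4 then 1 else 0)
    + (if cnt (pat a0 a1 a2 a3 a4 a5 a6 a7 a8 a9) a8 = 4 then 1 else 0)
    + (if cnt (pat a0 a1 a2 a3 a4 a5 a6 a7 a8 a9) a9 = 4 then 1 else 0) := by
  rw [Wset, Finset.card_filter, sum_univ_ten]
  simp only [pat0, pat1, pat2, pat3, pat4, pat5, pat6, pat7, pat8, pat9]
  rfl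

def gstar : Fin 10 → Fin 3 := fun r => if (r:ℕ) ≤ 4 then 0 else if (r:ℕ) ≤ 8 then 1 else 2

noncomputable def payf (j : Fin 3) (a : Fin 10 → Fin 100) : ℝ :=
  ∑ i : Fin 10, if gstar i = j then bcu i a else 0

lemma payf0_eq (a : Fin 10 → Fin 100) :
    payf 0 a = bcu 0 a + bcu 1 a + bcu 2 a + bcu 3 a + bcu 4 a := by
  rw [payf, sum_univ_ten]
  norm_num [gstar, show ((0:Fin 10):ℕ) = 0 from rfl, show ((1:Fin 10):ℕ) = 1 from rfl, show ((2:Fin 10):ℕ) = 2 from rfl, show ((3:Fin 10):ℕ) = 3 from rfl, show ((4:Fin 10):ℕ) = 4 from rfl, show ((5:Fin 10):ℕ) = 5 from rfl, show ((6:Fin 10):ℕ) = 6 from rfl, show ((7:Fin 10):ℕ) = 7 from rfl, show ((8:Fin 10):ℕ) = 8 from rfl, show ((9:Fin 10):ℕ) = 9 from rfl, show ((2:Fin 3)) ≠ 0 from by decide, show ((2:Fin 3)) ≠ 1 from by decide,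
    show ((1:Fin 3)) ≠ 0 from by decide, show ((0:Fin 3)) ≠ 1 from by decide,
    show ((0:Fin 3)) ≠ 2 from by decide, show ((1:Fin 3)) ≠ 2 from by decide]

lemma payf1_eq (a : Fin 10 → Fin 100) :
    payf 1 a = bcu 5 a + bcu 6 a + bcu 7 a + bcu 8 a := by
  rw [payf, sum_univ_ten]
  norm_num [gstar, show ((0:Fin 10):ℕ) = 0 from rfl, show ((1:Fin 10):ℕ) = 1 from rfl, show ((2:Fin 10):ℕ) = 2 from rfl, show ((3:Fin 10):ℕ) = 3 from rfl, show ((4:Fin 10):ℕ) = 4 from rfl, show ((5:Fin 10):ℕ) = 5 from rfl, show ((6:Fin 10):ℕ) = 6 from rfl, show ((7:Fin 10):ℕ) = 7 from rfl, show ((8:Fin 10):ℕ) = 8 from rfl, show ((9:Fin 10):ℕ) = 9 from rfl, show ((2:Fin 3)) ≠ 0 from by decide, show ((2:Fin 3)) ≠ 1 from by decide,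
    show ((1:Fin 3)) ≠ 0 from by decide, show ((0:Fin 3)) ≠ 1 from by decide,
    show ((0:Fin 3)) ≠ 2 from by decide, show ((1:Fin 3)) ≠ 2 from by decide]

lemma payf2_eq (a : Fin 10 → Fin 100) : payf 2 a = bcu 9 a := by
  rw [payf, sum_univ_ten]
  norm_num [gstar, show ((0:Fin 10):ℕ) = 0 from rfl, show ((1:Fin 10):ℕ) = 1 from rfl, show ((2:Fin 10):ℕ) = 2 from rfl, show ((3:Fin 10):ℕ) = 3 from rfl, show ((4:Fin 10):ℕ) = 4 from rfl, show ((5:Fin 10):ℕ) = 5 from rfl, show ((6:Fin 10):ℕ) = 6 from rfl, show ((7:Fin 10):ℕ) = 7 from rfl, show ((8:Fin 10):ℕ) = 8 from rfl, show ((9:Fin 10):ℕ) = 9 from rfl, show ((2:Fin 3)) ≠ 0 from by decide, show ((2:Fin 3)) ≠ 1 from by decide,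
    show ((1:Fin 3)) ≠ 0 from by decide, show ((0:Fin 3)) ≠ 1 from by decide,
    show ((0:Fin 3)) ≠ 2 from by decide, show ((1:Fin 3)) ≠ 2 from by decide]

lemma succ_ne (x : Fin 100) : x + 1 ≠ x := by
  intro h
  have h2 : (1 : Fin 100) = 0 := by
    have := congrArg (fun t => t - x) h
    simpa [add_comm, sub_self] using this
  exact absurd h2 (by decide)

lemma sub_one_add (v : Fin 100) : (v - 1) + 1 = v := by exact sub_add_cancel v 1

lemma sub_one_ne (v : Fin 100) : v - 1 ≠ v := by
  intro h
  have := succ_ne (v - 1)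
  rw [sub_one_add] at this
  exact this h.symm

lemma sum_const_100 (C : ℝ) : ∑ _z : Fin 100, C = 100 * C := by
  simp [Finset.sum_const, Finset.card_univ]

lemma chain1 (p : Fin 100) (A B : ℝ) :
    ∑ z : Fin 100, (if z = p then A else B) = A + 99 * B := by
  have h : ∀ z : Fin 100, (if z = p then A else B) = B + (if z = p then A - B else 0) := by
    intro z; split_ifs <;> ring
  rw [Finset.sum_congr rfl (fun z _ => h z), Finset.sum_add_distrib, sum_const_100,
    Finset.sum_ite_eq' univ p (fun _ => A - B)]
  simp; ring

lemma chain2 (p q : Fin 100) (hpq : p ≠ q) (A B C : ℝ) :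
    ∑ z : Fin 100, (if z = p then A else if z = q then B else C) = A + B + 98 * C := by
  have h : ∀ z : Fin 100, (if z = p then A else if z = q then B else C)
      = C + ((if z = p then A - C else 0) + (if z = q then B - C else 0)) := by
    intro z
    split_ifs with e1 e2
    · exact absurd (e1.symm.trans e2) hpq
    · ring
    · ring
    · ring
  rw [Finset.sum_congr rfl (fun z _ => h z), Finset.sum_add_distrib, sum_const_100,
    Finset.sum_add_distrib, Finset.sum_ite_eq' univ p (fun _ => A - C),
    Finset.sum_ite_eq' univ q (fun _ => B - C)]
  simp; ring

lemma chain3 (p q r : Fin 100) (hpq : p ≠ q) (hpr : p ≠ r) (hqr : q ≠ r) (A B C D : ℝ) :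
    ∑ z : Fin 100, (if z = p then A else if z = q then B else if z = r then C else D)
    = A + B + C + 97 * D := by
  have h : ∀ z : Fin 100, (if z = p then A else if z = q then B else if z = r then C else D)
      = D + ((if z = p then A - D else 0) + ((if z = q then B - D else 0) + (if z = r then C - D else 0))) := by
    intro z
    split_ifs with e1 e2 e3 e4 e5 e6 e7
    · exact absurd (e1.symm.trans e2) hpq
    · exact absurd (e1.symm.trans e2) hpq
    · exact absurd (e1.symm.trans e4) hpr
    · ring
    · exact absurd (e5.symm.trans e6) hqr
    · ring
    · ring
    · ring
  rw [Finset.sum_congr rfl (fun z _ => h z), Finset.sum_add_distrib, sum_const_100,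
    Finset.sum_add_distrib, Finset.sum_add_distrib, Finset.sum_ite_eq' univ p (fun _ => A - D),
    Finset.sum_ite_eq' univ q (fun _ => B - D), Finset.sum_ite_eq' univ r (fun _ => C - D)]
  simp; ring

lemma bcu_nonneg (i : Fin 10) (a : Fin 10 → Fin 100) : 0 ≤ bcu i a := by
  rw [bcu_eq]; split
  · positivity
  · exact le_rfl

lemma payf_le_100 (j : Fin 3) (a : Fin 10 → Fin 100) : payf j a ≤ 100 := by
  have h1 : payf j a ≤ ∑ i : Fin 10, bcu i a := by
    apply Finset.sum_le_sum
    intro i _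
    split
    · exact le_rfl
    · exact bcu_nonneg i a
  have h2 : ∑ i : Fin 10, bcu i a = ((Wset a).card : ℝ) * (100 / ((Wset a).card : ℝ)) := by
    have e : ∀ i : Fin 10, bcu i a = if i ∈ Wset a then (100:ℝ)/((Wset a).card : ℝ) else 0 := by
      intro i; rw [bcu_eq]
      by_cases h : cnt a (a i) = 4 <;> simp [h, Wset]
    rw [Finset.sum_congr rfl (fun i _ => e i), Finset.sum_ite_mem, Finset.univ_inter,
      Finset.sum_const, nsmul_eq_mul]
  rw [h2] at h1
  refine h1.trans ?_
  by_cases h : ((Wset a).card : ℝ) = 0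
  · rw [h]; norm_num
  · rw [mul_div_cancel₀ _ h]

lemma pay2_zero (x y s : Fin 100) : payf 2 (pat x x x x (x+1) y y y y s) = 0 := by
  rw [payf2_eq, bcu_eq, pat9]
  have h : cnt (pat x x x x (x+1) y y y y s) s ≠ 4 := by
    rw [cnt_pat]
    by_cases hx : x = s <;> by_cases hc : x + 1 = s <;> by_cases hy : y = s <;>
      simp [hx, hc, hy]
  simp [h]

lemma mA1 (v z : Fin 100) : payf 1 (pat v v v v (v+1) v v v v z) = 0 := by
  have hc : cnt (pat v v v v (v+1) v v v v z) v ≠ 4 := by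
    rw [cnt_pat]
    by_cases hz : z = v <;> simp [hz, succ_ne v]
  rw [payf1_eq, bcu_eq, bcu_eq, bcu_eq, bcu_eq, pat5, pat6, pat7, pat8]
  simp [hc]

lemma mA2 (x z : Fin 100) : payf 1 (pat x x x x (x+1) (x+1) (x+1) (x+1) (x+1) z) = 0 := by
  have hc : cnt (pat x x x x (x+1) (x+1) (x+1) (x+1) (x+1) z) (x+1) ≠ 4 := by
    rw [cnt_pat]
    by_cases hz : z = x + 1 <;> simp [hz, succ_ne x, Ne.symm (succ_ne x)]
  rw [payf1_eq, bcu_eq, bcu_eq, bcu_eq, bcu_eq, pat5, pat6, pat7, pat8]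
  simp [hc]

lemma mA3 (x v z : Fin 100) (h1 : x ≠ v) (h2 : x + 1 ≠ v) :
    payf 1 (pat x x x x (x+1) v v v v z)
    = if z = x then 100 else if z = x + 1 then 50 else if z = v then 0 else 50 := by
  have h1' : v ≠ x := Ne.symm h1
  have hsx : x + 1 ≠ x := succ_ne x
  split_ifs with hz1 hz2 hz3
  · -- z = x
    simp only [hz1]
    have cv : cnt (pat x x x x (x+1) v v v v x) v = 4 := by
      rw [cnt_pat]; simp [h1, h2]
    have ccx : cnt (pat x x x x (x+1) v v v v x) x = 5 := by
      rw [cnt_pat]; simp [hsx, h1']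
    have ccc : cnt (pat x x x x (x+1) v v v v x) (x+1) = 1 := by
      rw [cnt_pat]; simp [Ne.symm hsx, Ne.symm h2]
    have hW : ((Wset (pat x x x x (x+1) v v v v x)).card : ℕ) = 4 := by
      rw [Wcard_pat, cv, ccx, ccc]; norm_num
    rw [payf1_eq, bcu_eq, bcu_eq, bcu_eq, bcu_eq, pat5, pat6, pat7, pat8, cv, hW]
    norm_num
  · -- z = x + 1
    simp only [hz2]
    have cv : cnt (pat x x x x (x+1) v v v v (x+1)) v = 4 := by
      rw [cnt_pat]; simp [h1, h2]
    have ccx : cnt (pat x x x x (x+1) v v v v (x+1)) x = 4 := by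
      rw [cnt_pat]; simp [hsx, h1']
    have ccc : cnt (pat x x x x (x+1) v v v v (x+1)) (x+1) = 2 := by
      rw [cnt_pat]; simp [Ne.symm hsx, Ne.symm h2]
    have hW : ((Wset (pat x x x x (x+1) v v v v (x+1))).card : ℕ) = 8 := by
      rw [Wcard_pat, cv, ccx, ccc]; norm_num
    rw [payf1_eq, bcu_eq, bcu_eq, bcu_eq, bcu_eq, pat5, pat6, pat7, pat8, cv, hW]
    norm_num
  · -- z = v
    simp only [hz3]
    have cv : cnt (pat x x x x (x+1) v v v v v) v = 5 := by
      rw [cnt_pat]; simp [h1, h2]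
    rw [payf1_eq, bcu_eq, bcu_eq, bcu_eq, bcu_eq, pat5, pat6, pat7, pat8, cv]
    norm_num
  · -- z generic
    have hxz : x ≠ z := fun h => hz1 h.symm
    have hcz : x + 1 ≠ z := fun h => hz2 h.symm
    have hvz : v ≠ z := fun h => hz3 h.symm
    have cv : cnt (pat x x x x (x+1) v v v v z) v = 4 := by
      rw [cnt_pat]; simp [h1, h2, hz3]
    have ccx : cnt (pat x x x x (x+1) v v v v z) x = 4 := by
      rw [cnt_pat]; simp [hsx, h1', hz1]
    have ccc : cnt (pat x x x x (x+1) v v v v z) (x+1) = 1 := by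
      rw [cnt_pat]; simp [Ne.symm hsx, Ne.symm h2, hz2]
    have cz : cnt (pat x x x x (x+1) v v v v z) z = 1 := by
      rw [cnt_pat]; simp [hxz, hcz, hvz]
    have hW : ((Wset (pat x x x x (x+1) v v v v z)).card : ℕ) = 8 := by
      rw [Wcard_pat, cv, ccx, ccc, cz]; norm_num
    rw [payf1_eq, bcu_eq, bcu_eq, bcu_eq, bcu_eq, pat5, pat6, pat7, pat8, cv, hW]
    norm_num

lemma medA (v : Fin 100) :
    ∑ x : Fin 100, ∑ z : Fin 100, payf 1 (pat x x x x (x+1) v v v v z) = 490000 := by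
  have hx : ∀ x : Fin 100, ∑ z : Fin 100, payf 1 (pat x x x x (x+1) v v v v z)
      = if x = v then 0 else if x = v - 1 then 0 else 5000 := by
    intro x
    split_ifs with hv1 hv2
    · simp only [hv1]
      exact Finset.sum_eq_zero (fun z _ => mA1 v z)
    · have hv : x + 1 = v := by rw [hv2, sub_one_add]
      exact Finset.sum_eq_zero (fun z _ => by rw [← hv]; exact mA2 x z)
    · have hv2' : x + 1 ≠ v := by
        intro hc
        exact hv2 (by rw [← hc, add_sub_cancel_right])
      rw [Finset.sum_congr rfl (fun z _ => mA3 x v z hv1 hv2')]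
      rw [chain3 x (x+1) v (Ne.symm (succ_ne x)) hv1 hv2']
      norm_num
  rw [Finset.sum_congr rfl (fun x _ => hx x)]
  rw [chain2 v (v - 1) (Ne.symm (sub_one_ne v)) 0 0 5000]
  norm_num

/-- two distinct medium values cannot both have global count 4 (good regime) -/
lemma pair_contr (x z v5 v6 v7 v8 p q : Fin 100) (hpq : p ≠ q)
    (hpx : x ≠ p) (hqx : x ≠ q)
    (cp : cnt (pat x x x x (x+1) v5 v6 v7 v8 z) p = 4)
    (cq : cnt (pat x x x x (x+1) v5 v6 v7 v8 z) q = 4) : False := by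
  rw [cnt_pat] at cp cq
  simp only [hpx, if_false, if_neg hpx, if_neg hqx] at cp cq
  have t1 : (if x + 1 = p then 1 else 0) + (if x + 1 = q then 1 else 0) ≤ 1 := by
    by_cases h1 : x + 1 = p <;> by_cases h2 : x + 1 = q
    · exact absurd (h1.symm.trans h2) hpq
    · simp [h1, h2, hpq, hpq.symm]
    · simp [h1, h2, hpq, hpq.symm]
    · simp [h1, h2, hpq, hpq.symm]
  have t2 : (if z = p then 1 else 0) + (if z = q then 1 else 0) ≤ 1 := by
    by_cases h1 : z = p <;> by_cases h2 : z = q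
    · exact absurd (h1.symm.trans h2) hpq
    · simp [h1, h2, hpq, hpq.symm]
    · simp [h1, h2, hpq, hpq.symm]
    · simp [h1, h2, hpq, hpq.symm]
  have t3 : (if v5 = p then 1 else 0) + (if v5 = q then 1 else 0) ≤ 1 := by
    by_cases h1 : v5 = p <;> by_cases h2 : v5 = q
    · exact absurd (h1.symm.trans h2) hpq
    · simp [h1, h2, hpq, hpq.symm]
    · simp [h1, h2, hpq, hpq.symm]
    · simp [h1, h2, hpq, hpq.symm]
  have t4 : (if v6 = p then 1 else 0) + (if v6 = q then 1 else 0) ≤ 1 := by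
    by_cases h1 : v6 = p <;> by_cases h2 : v6 = q
    · exact absurd (h1.symm.trans h2) hpq
    · simp [h1, h2, hpq, hpq.symm]
    · simp [h1, h2, hpq, hpq.symm]
    · simp [h1, h2, hpq, hpq.symm]
  have t5 : (if v7 = p then 1 else 0) + (if v7 = q then 1 else 0) ≤ 1 := by
    by_cases h1 : v7 = p <;> by_cases h2 : v7 = q
    · exact absurd (h1.symm.trans h2) hpq
    · simp [h1, h2, hpq, hpq.symm]
    · simp [h1, h2, hpq, hpq.symm]
    · simp [h1, h2, hpq, hpq.symm]
  have t6 : (if v8 = p then 1 else 0) + (if v8 = q then 1 else 0) ≤ 1 := by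
    by_cases h1 : v8 = p <;> by_cases h2 : v8 = q
    · exact absurd (h1.symm.trans h2) hpq
    · simp [h1, h2, hpq, hpq.symm]
    · simp [h1, h2, hpq, hpq.symm]
    · simp [h1, h2, hpq, hpq.symm]
  omega

lemma ratio_bound (K Wc : ℕ) (hK : K ≤ 3) (hW : 4 + K ≤ Wc) :
    (K : ℝ) * (100 / (Wc : ℝ)) ≤ 43 := by
  have hWc : (4 + K : ℝ) ≤ (Wc : ℝ) := by exact_mod_cast hW
  have hWpos : (0:ℝ) < (Wc : ℝ) := by
    have : (0:ℝ) < (4 + K : ℝ) := by positivity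
    linarith
  rw [mul_div_assoc']
  rw [div_le_iff₀ hWpos]
  have hK' : (K : ℝ) ≤ 3 := by exact_mod_cast hK
  nlinarith [hWc, hK', Nat.cast_nonneg (α := ℝ) K]

lemma medB_good (x z v5 v6 v7 v8 : Fin 100)
    (h5 : v5 ≠ x) (h6 : v6 ≠ x) (h7 : v7 ≠ x) (h8 : v8 ≠ x) (hz : z ≠ x)
    (hne : ¬(v5 = v6 ∧ v6 = v7 ∧ v7 = v8)) :
    payf 1 (pat x x x x (x+1) v5 v6 v7 v8 z) ≤ 43 := by
  have cx : cnt (pat x x x x (x+1) v5 v6 v7 v8 z) x = 4 := by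
    rw [cnt_pat]; simp [succ_ne x, h5, h6, h7, h8, hz]
  -- abbreviations
  have hWk : 4 + ((if cnt (pat x x x x (x+1) v5 v6 v7 v8 z) v5 = 4 then 1 else 0)
      + (if cnt (pat x x x x (x+1) v5 v6 v7 v8 z) v6 = 4 then 1 else 0)
      + (if cnt (pat x x x x (x+1) v5 v6 v7 v8 z) v7 = 4 then 1 else 0)
      + (if cnt (pat x x x x (x+1) v5 v6 v7 v8 z) v8 = 4 then 1 else 0))
      ≤ ((Wset (pat x x x x (x+1) v5 v6 v7 v8 z)).card : ℕ) := by
    rw [Wcard_pat, cx]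
    norm_num
    omega
  have hk3 : ((if cnt (pat x x x x (x+1) v5 v6 v7 v8 z) v5 = 4 then 1 else 0)
      + (if cnt (pat x x x x (x+1) v5 v6 v7 v8 z) v6 = 4 then 1 else 0)
      + (if cnt (pat x x x x (x+1) v5 v6 v7 v8 z) v7 = 4 then 1 else 0)
      + (if cnt (pat x x x x (x+1) v5 v6 v7 v8 z) v8 = 4 then 1 else 0) : ℕ) ≤ 3 := by
    by_contra hgt
    push_neg at hgt
    have bb5 : (if cnt (pat x x x x (x+1) v5 v6 v7 v8 z) v5 = 4 then 1 else 0) ≤ 1 := by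
      split <;> omega
    have bb6 : (if cnt (pat x x x x (x+1) v5 v6 v7 v8 z) v6 = 4 then 1 else 0) ≤ 1 := by
      split <;> omega
    have bb7 : (if cnt (pat x x x x (x+1) v5 v6 v7 v8 z) v7 = 4 then 1 else 0) ≤ 1 := by
      split <;> omega
    have bb8 : (if cnt (pat x x x x (x+1) v5 v6 v7 v8 z) v8 = 4 then 1 else 0) ≤ 1 := by
      split <;> omega
    have c5 : cnt (pat x x x x (x+1) v5 v6 v7 v8 z) v5 = 4 := by
      by_cases h : cnt (pat x x x x (x+1) v5 v6 v7 v8 z) v5 = 4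
      · exact h
      · exfalso; simp only [if_neg h] at hgt; omega
    have c6 : cnt (pat x x x x (x+1) v5 v6 v7 v8 z) v6 = 4 := by
      by_cases h : cnt (pat x x x x (x+1) v5 v6 v7 v8 z) v6 = 4
      · exact h
      · exfalso; simp only [if_neg h] at hgt; omega
    have c7 : cnt (pat x x x x (x+1) v5 v6 v7 v8 z) v7 = 4 := by
      by_cases h : cnt (pat x x x x (x+1) v5 v6 v7 v8 z) v7 = 4
      · exact h
      · exfalso; simp only [if_neg h] at hgt; omega
    have c8 : cnt (pat x x x x (x+1) v5 v6 v7 v8 z) v8 = 4 := by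
      by_cases h : cnt (pat x x x x (x+1) v5 v6 v7 v8 z) v8 = 4
      · exact h
      · exfalso; simp only [if_neg h] at hgt; omega
    have hor : v5 ≠ v6 ∨ v6 ≠ v7 ∨ v7 ≠ v8 := by tauto
    rcases hor with h | h | h
    · exact pair_contr x z v5 v6 v7 v8 v5 v6 h (Ne.symm h5) (Ne.symm h6) c5 c6
    · exact pair_contr x z v5 v6 v7 v8 v6 v7 h (Ne.symm h6) (Ne.symm h7) c6 c7
    · exact pair_contr x z v5 v6 v7 v8 v7 v8 h (Ne.symm h7) (Ne.symm h8) c7 c8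
  have hpay : payf 1 (pat x x x x (x+1) v5 v6 v7 v8 z)
      = (((if cnt (pat x x x x (x+1) v5 v6 v7 v8 z) v5 = 4 then 1 else 0)
      + (if cnt (pat x x x x (x+1) v5 v6 v7 v8 z) v6 = 4 then 1 else 0)
      + (if cnt (pat x x x x (x+1) v5 v6 v7 v8 z) v7 = 4 then 1 else 0)
      + (if cnt (pat x x x x (x+1) v5 v6 v7 v8 z) v8 = 4 then 1 else 0) : ℕ) : ℝ)
      * (100 / ((Wset (pat x x x x (x+1) v5 v6 v7 v8 z)).card : ℝ)) := by
    rw [payf1_eq, bcu_eq, bcu_eq, bcu_eq, bcu_eq, pat5, pat6, pat7, pat8]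
    push_cast
    split_ifs <;> ring
  rw [hpay]
  exact ratio_bound _ _ hk3 hWk

lemma medB (v5 v6 v7 v8 : Fin 100) (hne : ¬(v5 = v6 ∧ v6 = v7 ∧ v7 = v8)) :
    ∑ x : Fin 100, ∑ z : Fin 100, payf 1 (pat x x x x (x+1) v5 v6 v7 v8 z) ≤ 490000 := by
  have hx : ∀ x : Fin 100, ∑ z : Fin 100, payf 1 (pat x x x x (x+1) v5 v6 v7 v8 z)
      ≤ if x ∈ ({v5, v6, v7, v8} : Finset (Fin 100)) then 10000 else 4357 := by
    intro x
    split_ifs with hmem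
    · calc ∑ z : Fin 100, payf 1 (pat x x x x (x+1) v5 v6 v7 v8 z)
          ≤ ∑ _z : Fin 100, (100:ℝ) := Finset.sum_le_sum (fun z _ => payf_le_100 _ _)
        _ = 10000 := by rw [sum_const_100]; norm_num
    · simp only [Finset.mem_insert, Finset.mem_singleton, not_or] at hmem
      obtain ⟨n5, n6, n7, n8⟩ := hmem
      calc ∑ z : Fin 100, payf 1 (pat x x x x (x+1) v5 v6 v7 v8 z)
          ≤ ∑ z : Fin 100, (if z = x then (100:ℝ) else 43) := by
            apply Finset.sum_le_sum
            intro zz _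
            split_ifs with hzz
            · exact payf_le_100 _ _
            · exact medB_good x zz v5 v6 v7 v8 (fun h => n5 h.symm) (fun h => n6 h.symm)
                (fun h => n7 h.symm) (fun h => n8 h.symm) hzz hne
        _ = 4357 := by rw [chain1]; norm_num
  calc ∑ x : Fin 100, ∑ z : Fin 100, payf 1 (pat x x x x (x+1) v5 v6 v7 v8 z)
      ≤ ∑ x : Fin 100, (if x ∈ ({v5, v6, v7, v8} : Finset (Fin 100)) then (10000:ℝ) else 4357) :=
        Finset.sum_le_sum (fun x _ => hx x)
    _ ≤ 490000 := by
      have hsplit : ∀ x : Fin 100, (if x ∈ ({v5, v6, v7, v8} : Finset (Fin 100)) then (10000:ℝ) else 4357)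
          = 4357 + (if x ∈ ({v5, v6, v7, v8} : Finset (Fin 100)) then (5643:ℝ) else 0) := by
        intro x; split_ifs <;> norm_num
      rw [Finset.sum_congr rfl (fun x _ => hsplit x), Finset.sum_add_distrib, sum_const_100,
        Finset.sum_ite_mem, Finset.univ_inter, Finset.sum_const, nsmul_eq_mul]
      have hcard : (({v5, v6, v7, v8} : Finset (Fin 100)).card : ℝ) ≤ 4 := by
        have h3 : ({v7, v8} : Finset (Fin 100)).card ≤ 2 := by
          refine le_trans (Finset.card_insert_le _ _) ?_
          simp
        have h2 : ({v6, v7, v8} : Finset (Fin 100)).card ≤ 3 := by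
          refine le_trans (Finset.card_insert_le _ _) ?_
          omega
        have h1 : ({v5, v6, v7, v8} : Finset (Fin 100)).card ≤ 4 := by
          refine le_trans (Finset.card_insert_le _ _) ?_
          omega
        exact_mod_cast h1
      nlinarith [hcard]
  
lemma medCore (v5 v6 v7 v8 : Fin 100) :
    ∑ x : Fin 100, ∑ z : Fin 100, payf 1 (pat x x x x (x+1) v5 v6 v7 v8 z) ≤ 490000 := by
  by_cases h : v5 = v6 ∧ v6 = v7 ∧ v7 = v8
  · obtain ⟨h1, h2, h3⟩ := h
    rw [h1, h2, h3]
    exact le_of_eq (medA v8)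
  · exact medB v5 v6 v7 v8 h

def nb (u0 u1 u2 u3 u4 v : Fin 100) : ℕ :=
  (if u0 = v then 1 else 0) + (if u1 = v then 1 else 0) + (if u2 = v then 1 else 0)
  + (if u3 = v then 1 else 0) + (if u4 = v then 1 else 0)

lemma cntL (u0 u1 u2 u3 u4 y z q : Fin 100) :
    cnt (pat u0 u1 u2 u3 u4 y y y y z) q
    = nb u0 u1 u2 u3 u4 q + (if y = q then 1 else 0) * 4 + (if z = q then 1 else 0) := by
  rw [cnt_pat, nb]
  by_cases h : y = q <;> simp [h] <;> ring

lemma cast5 (u0 u1 u2 u3 u4 p : Fin 100) :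
    ((nb u0 u1 u2 u3 u4 p : ℕ) : ℝ)
    = (if u0 = p then (1:ℝ) else 0) + (if u1 = p then 1 else 0) + (if u2 = p then 1 else 0)
    + (if u3 = p then 1 else 0) + (if u4 = p then 1 else 0) := by
  rw [nb]
  push_cast
  rfl

lemma nb_zero (u0 u1 u2 u3 u4 v w p : Fin 100)
    (d0 : u0 = v ∨ u0 = w) (d1 : u1 = v ∨ u1 = w) (d2 : u2 = v ∨ u2 = w)
    (d3 : u3 = v ∨ u3 = w) (d4 : u4 = v ∨ u4 = w)
    (hpv : p ≠ v) (hpw : p ≠ w) : nb u0 u1 u2 u3 u4 p = 0 := by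
  rw [nb]
  rcases d0 with h0 | h0 <;> rcases d1 with h1 | h1 <;> rcases d2 with h2 | h2 <;>
    rcases d3 with h3 | h3 <;> rcases d4 with h4 | h4 <;>
    simp [h0, h1, h2, h3, h4, Ne.symm hpv, Ne.symm hpw]

/-- decomposition of the large payoff given the value dichotomy -/
lemma payfL_form (u0 u1 u2 u3 u4 y z v w : Fin 100) (hwv : w ≠ v)
    (d0 : u0 = v ∨ u0 = w) (d1 : u1 = v ∨ u1 = w) (d2 : u2 = v ∨ u2 = w)
    (d3 : u3 = v ∨ u3 = w) (d4 : u4 = v ∨ u4 = w) :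
    payf 0 (pat u0 u1 u2 u3 u4 y y y y z)
    = ((nb u0 u1 u2 u3 u4 v : ℕ) : ℝ)
        * (if cnt (pat u0 u1 u2 u3 u4 y y y y z) v = 4
            then 100 / ((Wset (pat u0 u1 u2 u3 u4 y y y y z)).card : ℝ) else 0)
      + ((nb u0 u1 u2 u3 u4 w : ℕ) : ℝ)
        * (if cnt (pat u0 u1 u2 u3 u4 y y y y z) w = 4
            then 100 / ((Wset (pat u0 u1 u2 u3 u4 y y y y z)).card : ℝ) else 0) := by
  have hvw : v ≠ w := Ne.symm hwv
  rw [payf0_eq, bcu_eq, bcu_eq, bcu_eq, bcu_eq, bcu_eq, pat0, pat1, pat2, pat3, pat4,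
    cast5, cast5]
  have e : ∀ t : Fin 100, (t = v ∨ t = w) →
      (if cnt (pat u0 u1 u2 u3 u4 y y y y z) t = 4
          then 100 / ((Wset (pat u0 u1 u2 u3 u4 y y y y z)).card : ℝ) else 0)
      = (if t = v then (1:ℝ) else 0)
          * (if cnt (pat u0 u1 u2 u3 u4 y y y y z) v = 4
              then 100 / ((Wset (pat u0 u1 u2 u3 u4 y y y y z)).card : ℝ) else 0)
        + (if t = w then (1:ℝ) else 0)
          * (if cnt (pat u0 u1 u2 u3 u4 y y y y z) w = 4
              then 100 / ((Wset (pat u0 u1 u2 u3 u4 y y y y z)).card : ℝ) else 0) := by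
    intro t ht
    rcases ht with h | h <;> rw [h] <;> simp [hvw, hwv]
  rw [e u0 d0, e u1 d1, e u2 d2, e u3 d3, e u4 d4]
  ring

/-- decomposition of the winner count given the value dichotomy -/
lemma WcL_form (u0 u1 u2 u3 u4 y z v w : Fin 100) (hwv : w ≠ v)
    (d0 : u0 = v ∨ u0 = w) (d1 : u1 = v ∨ u1 = w) (d2 : u2 = v ∨ u2 = w)
    (d3 : u3 = v ∨ u3 = w) (d4 : u4 = v ∨ u4 = w) :
    ((Wset (pat u0 u1 u2 u3 u4 y y y y z)).card : ℕ)
    = nb u0 u1 u2 u3 u4 v * (if cnt (pat u0 u1 u2 u3 u4 y y y y z) v = 4 then 1 else 0)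
    + nb u0 u1 u2 u3 u4 w * (if cnt (pat u0 u1 u2 u3 u4 y y y y z) w = 4 then 1 else 0)
    + 4 * (if cnt (pat u0 u1 u2 u3 u4 y y y y z) y = 4 then 1 else 0)
    + (if cnt (pat u0 u1 u2 u3 u4 y y y y z) z = 4 then 1 else 0) := by
  have hvw : v ≠ w := Ne.symm hwv
  rw [Wcard_pat]
  have e : ∀ t : Fin 100, (t = v ∨ t = w) →
      (if cnt (pat u0 u1 u2 u3 u4 y y y y z) t = 4 then 1 else 0)
      = (if t = v then 1 else 0)
          * (if cnt (pat u0 u1 u2 u3 u4 y y y y z) v = 4 then 1 else 0)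
        + (if t = w then 1 else 0)
          * (if cnt (pat u0 u1 u2 u3 u4 y y y y z) w = 4 then 1 else 0) := by
    intro t ht
    rcases ht with h | h <;> rw [h] <;> simp [hvw, hwv]
  rw [e u0 d0, e u1 d1, e u2 d2, e u3 d3, e u4 d4, nb, nb]
  ring

lemma largeFour (u0 u1 u2 u3 u4 v w : Fin 100) (hwv : w ≠ v)
    (h4 : nb u0 u1 u2 u3 u4 v = 4) (h1w : nb u0 u1 u2 u3 u4 w = 1)
    (d0 : u0 = v ∨ u0 = w) (d1 : u1 = v ∨ u1 = w) (d2 : u2 = v ∨ u2 = w)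
    (d3 : u3 = v ∨ u3 = w) (d4 : u4 = v ∨ u4 = w) :
    ∑ y : Fin 100, ∑ z : Fin 100, payf 0 (pat u0 u1 u2 u3 u4 y y y y z) = 499900 := by
  have hvw : v ≠ w := Ne.symm hwv
  have hy : ∀ y : Fin 100, ∑ z : Fin 100, payf 0 (pat u0 u1 u2 u3 u4 y y y y z)
      = if y = v then 0 else if y = w then 9900 else 5000 := by
    intro y
    split_ifs with hyv hyw
    · -- y = v : zero for all z
      simp only [hyv]
      apply Finset.sum_eq_zero
      intro z _
      rw [payfL_form u0 u1 u2 u3 u4 v z v w hwv d0 d1 d2 d3 d4]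
      have cv : cnt (pat u0 u1 u2 u3 u4 v v v v z) v ≠ 4 := by
        rw [cntL, h4]
        by_cases hz : z = v <;> simp [hz]
      have cw : cnt (pat u0 u1 u2 u3 u4 v v v v z) w ≠ 4 := by
        rw [cntL, h1w]
        by_cases hz : z = w <;> simp [hz, hvw]
      simp [cv, cw]
    · -- y = w
      simp only [hyw]
      have hz : ∀ z : Fin 100, payf 0 (pat u0 u1 u2 u3 u4 w w w w z)
          = if z = v then 0 else 100 := by
        intro z
        split_ifs with hzv
        · simp only [hzv]
          rw [payfL_form u0 u1 u2 u3 u4 w v v w hwv d0 d1 d2 d3 d4]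
          have cv : cnt (pat u0 u1 u2 u3 u4 w w w w v) v ≠ 4 := by
            rw [cntL, h4]; simp [hwv]
          have cw : cnt (pat u0 u1 u2 u3 u4 w w w w v) w ≠ 4 := by
            rw [cntL, h1w]; simp [hvw]
          simp [cv, cw]
        · by_cases hzw : z = w
          · simp only [hzw]
            rw [payfL_form u0 u1 u2 u3 u4 w w v w hwv d0 d1 d2 d3 d4]
            have cv : cnt (pat u0 u1 u2 u3 u4 w w w w w) v = 4 := by
              rw [cntL, h4]; simp [hwv]
            have cw : cnt (pat u0 u1 u2 u3 u4 w w w w w) w = 6 := by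
              rw [cntL, h1w]; simp
            have hWc : ((Wset (pat u0 u1 u2 u3 u4 w w w w w)).card : ℕ) = 4 := by
              rw [WcL_form u0 u1 u2 u3 u4 w w v w hwv d0 d1 d2 d3 d4, cv, cw, h4, h1w]
              norm_num
            rw [cv, cw, h4, h1w, hWc]
            norm_num
          · rw [payfL_form u0 u1 u2 u3 u4 w z v w hwv d0 d1 d2 d3 d4]
            have nbz : nb u0 u1 u2 u3 u4 z = 0 :=
              nb_zero u0 u1 u2 u3 u4 v w z d0 d1 d2 d3 d4 hzv hzw
            have cv : cnt (pat u0 u1 u2 u3 u4 w w w w z) v = 4 := by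
              rw [cntL, h4]; simp [hwv, hzv]
            have cw : cnt (pat u0 u1 u2 u3 u4 w w w w z) w = 5 := by
              rw [cntL, h1w]; simp [hzw]
            have cz : cnt (pat u0 u1 u2 u3 u4 w w w w z) z = 1 := by
              rw [cntL, nbz]; simp [show w ≠ z from fun h => hzw h.symm]
            have hWc : ((Wset (pat u0 u1 u2 u3 u4 w w w w z)).card : ℕ) = 4 := by
              rw [WcL_form u0 u1 u2 u3 u4 w z v w hwv d0 d1 d2 d3 d4, cv, cw, cz, h4, h1w]
              norm_num
            rw [cv, cw, h4, h1w, hWc]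
            norm_num
      rw [Finset.sum_congr rfl (fun z _ => hz z), chain1 v 0 100]
      norm_num
    · -- y generic
      have nby : nb u0 u1 u2 u3 u4 y = 0 :=
        nb_zero u0 u1 u2 u3 u4 v w y d0 d1 d2 d3 d4 hyv hyw
      have hz : ∀ z : Fin 100, payf 0 (pat u0 u1 u2 u3 u4 y y y y z)
          = if z = v then 0 else if z = w then 50 else if z = y then 100 else 50 := by
        intro z
        split_ifs with hzv hzw hzy
        · simp only [hzv]
          rw [payfL_form u0 u1 u2 u3 u4 y v v w hwv d0 d1 d2 d3 d4]
          have cv : cnt (pat u0 u1 u2 u3 u4 y y y y v) v ≠ 4 := by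
            rw [cntL, h4]; simp [hyv]
          have cw : cnt (pat u0 u1 u2 u3 u4 y y y y v) w ≠ 4 := by
            rw [cntL, h1w]; simp [hyw, hvw]
          simp [cv, cw]
        · simp only [hzw]
          rw [payfL_form u0 u1 u2 u3 u4 y w v w hwv d0 d1 d2 d3 d4]
          have cv : cnt (pat u0 u1 u2 u3 u4 y y y y w) v = 4 := by
            rw [cntL, h4]; simp [hyv, hwv]
          have cw : cnt (pat u0 u1 u2 u3 u4 y y y y w) w = 2 := by
            rw [cntL, h1w]; simp [hyw]
          have cy : cnt (pat u0 u1 u2 u3 u4 y y y y w) y = 4 := by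
            rw [cntL, nby]; simp [show w ≠ y from fun h => hyw h.symm]
          have hWc : ((Wset (pat u0 u1 u2 u3 u4 y y y y w)).card : ℕ) = 8 := by
            rw [WcL_form u0 u1 u2 u3 u4 y w v w hwv d0 d1 d2 d3 d4, cv, cw, cy, h4, h1w]
            norm_num
          rw [cv, cw, h4, h1w, hWc]
          norm_num
        · simp only [hzy]
          rw [payfL_form u0 u1 u2 u3 u4 y y v w hwv d0 d1 d2 d3 d4]
          have cv : cnt (pat u0 u1 u2 u3 u4 y y y y y) v = 4 := by
            rw [cntL, h4]; simp [hyv]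
          have cw : cnt (pat u0 u1 u2 u3 u4 y y y y y) w = 1 := by
            rw [cntL, h1w]; simp [hyw]
          have cy : cnt (pat u0 u1 u2 u3 u4 y y y y y) y = 5 := by
            rw [cntL, nby]; simp
          have hWc : ((Wset (pat u0 u1 u2 u3 u4 y y y y y)).card : ℕ) = 4 := by
            rw [WcL_form u0 u1 u2 u3 u4 y y v w hwv d0 d1 d2 d3 d4, cv, cw, cy, h4, h1w]
            norm_num
          rw [cv, cw, h4, h1w, hWc]
          norm_num
        · rw [payfL_form u0 u1 u2 u3 u4 y z v w hwv d0 d1 d2 d3 d4]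
          have nbz : nb u0 u1 u2 u3 u4 z = 0 :=
            nb_zero u0 u1 u2 u3 u4 v w z d0 d1 d2 d3 d4 hzv hzw
          have cv : cnt (pat u0 u1 u2 u3 u4 y y y y z) v = 4 := by
            rw [cntL, h4]; simp [hyv, hzv]
          have cw : cnt (pat u0 u1 u2 u3 u4 y y y y z) w = 1 := by
            rw [cntL, h1w]; simp [hyw, hzw]
          have cy : cnt (pat u0 u1 u2 u3 u4 y y y y z) y = 4 := by
            rw [cntL, nby]; simp [hzy]
          have cz : cnt (pat u0 u1 u2 u3 u4 y y y y z) z = 1 := by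
            rw [cntL, nbz]; simp [show y ≠ z from fun h => hzy h.symm]
          have hWc : ((Wset (pat u0 u1 u2 u3 u4 y y y y z)).card : ℕ) = 8 := by
            rw [WcL_form u0 u1 u2 u3 u4 y z v w hwv d0 d1 d2 d3 d4, cv, cw, cy, cz, h4, h1w]
            norm_num
          rw [cv, cw, h4, h1w, hWc]
          norm_num
      rw [Finset.sum_congr rfl (fun z _ => hz z),
        chain3 v w y hvw (Ne.symm hyv) (Ne.symm hyw)]
      norm_num
  rw [Finset.sum_congr rfl (fun y _ => hy y), chain2 v w hvw 0 9900 5000]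
  norm_num

lemma largeGood (u0 u1 u2 u3 u4 y z : Fin 100)
    (h0y : u0 ≠ y) (h1y : u1 ≠ y) (h2y : u2 ≠ y) (h3y : u3 ≠ y) (h4y : u4 ≠ y)
    (hzy : z ≠ y) (hn : ∀ p : Fin 100, nb u0 u1 u2 u3 u4 p ≠ 4) :
    payf 0 (pat u0 u1 u2 u3 u4 y y y y z) ≤ 43 := by
  have nby : nb u0 u1 u2 u3 u4 y = 0 := by
    rw [nb]; simp [h0y, h1y, h2y, h3y, h4y]
  have cy : cnt (pat u0 u1 u2 u3 u4 y y y y z) y = 4 := by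
    rw [cntL, nby]; simp [hzy]
  have imp : ∀ t : Fin 100, t ≠ y → cnt (pat u0 u1 u2 u3 u4 y y y y z) t = 4 → z = t := by
    intro t hty hc
    rw [cntL] at hc
    rw [if_neg (Ne.symm hty)] at hc
    by_cases hzt : z = t
    · exact hzt
    · rw [if_neg hzt] at hc
      simp at hc
      exact absurd hc (hn t)
  have hK3 : ((if cnt (pat u0 u1 u2 u3 u4 y y y y z) u0 = 4 then 1 else 0)
      + (if cnt (pat u0 u1 u2 u3 u4 y y y y z) u1 = 4 then 1 else 0)
      + (if cnt (pat u0 u1 u2 u3 u4 y y y y z) u2 = 4 then 1 else 0)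
      + (if cnt (pat u0 u1 u2 u3 u4 y y y y z) u3 = 4 then 1 else 0)
      + (if cnt (pat u0 u1 u2 u3 u4 y y y y z) u4 = 4 then 1 else 0) : ℕ) ≤ 3 := by
    by_contra hgt
    push_neg at hgt
    have le0 : (if cnt (pat u0 u1 u2 u3 u4 y y y y z) u0 = 4 then 1 else 0)
        ≤ (if u0 = z then 1 else 0) := by
      by_cases hc : cnt (pat u0 u1 u2 u3 u4 y y y y z) u0 = 4
      · rw [if_pos hc, if_pos (imp u0 h0y hc).symm]
      · simp [hc]
    have le1 : (if cnt (pat u0 u1 u2 u3 u4 y y y y z) u1 = 4 then 1 else 0)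
        ≤ (if u1 = z then 1 else 0) := by
      by_cases hc : cnt (pat u0 u1 u2 u3 u4 y y y y z) u1 = 4
      · rw [if_pos hc, if_pos (imp u1 h1y hc).symm]
      · simp [hc]
    have le2 : (if cnt (pat u0 u1 u2 u3 u4 y y y y z) u2 = 4 then 1 else 0)
        ≤ (if u2 = z then 1 else 0) := by
      by_cases hc : cnt (pat u0 u1 u2 u3 u4 y y y y z) u2 = 4
      · rw [if_pos hc, if_pos (imp u2 h2y hc).symm]
      · simp [hc]
    have le3 : (if cnt (pat u0 u1 u2 u3 u4 y y y y z) u3 = 4 then 1 else 0)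
        ≤ (if u3 = z then 1 else 0) := by
      by_cases hc : cnt (pat u0 u1 u2 u3 u4 y y y y z) u3 = 4
      · rw [if_pos hc, if_pos (imp u3 h3y hc).symm]
      · simp [hc]
    have le4 : (if cnt (pat u0 u1 u2 u3 u4 y y y y z) u4 = 4 then 1 else 0)
        ≤ (if u4 = z then 1 else 0) := by
      by_cases hc : cnt (pat u0 u1 u2 u3 u4 y y y y z) u4 = 4
      · rw [if_pos hc, if_pos (imp u4 h4y hc).symm]
      · simp [hc]
    have hnq := hn z
    rw [nb] at hnq
    have bz0 : (if u0 = z then 1 else 0) ≤ 1 := by split <;> omega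
    have bz1 : (if u1 = z then 1 else 0) ≤ 1 := by split <;> omega
    have bz2 : (if u2 = z then 1 else 0) ≤ 1 := by split <;> omega
    have bz3 : (if u3 = z then 1 else 0) ≤ 1 := by split <;> omega
    have bz4 : (if u4 = z then 1 else 0) ≤ 1 := by split <;> omega
    have e0 : (if u0 = z then 1 else 0) = 1 := by omega
    have e1 : (if u1 = z then 1 else 0) = 1 := by omega
    have e2 : (if u2 = z then 1 else 0) = 1 := by omega
    have e3 : (if u3 = z then 1 else 0) = 1 := by omega
    have e4 : (if u4 = z then 1 else 0) = 1 := by omega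
    have u0z : u0 = z := by
      by_contra h
      rw [if_neg h] at e0
      omega
    have u1z : u1 = z := by
      by_contra h
      rw [if_neg h] at e1
      omega
    have u2z : u2 = z := by
      by_contra h
      rw [if_neg h] at e2
      omega
    have u3z : u3 = z := by
      by_contra h
      rw [if_neg h] at e3
      omega
    have u4z : u4 = z := by
      by_contra h
      rw [if_neg h] at e4
      omega
    rw [u0z, u1z, u2z, u3z, u4z] at hgt
    have cz6 : cnt (pat z z z z z y y y y z) z ≠ 4 := by
      rw [cntL]; simp [nb, Ne.symm hzy]
    simp [cz6] at hgt
  have hWK : 4 + ((if cnt (pat u0 u1 u2 u3 u4 y y y y z) u0 = 4 then 1 else 0)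
      + (if cnt (pat u0 u1 u2 u3 u4 y y y y z) u1 = 4 then 1 else 0)
      + (if cnt (pat u0 u1 u2 u3 u4 y y y y z) u2 = 4 then 1 else 0)
      + (if cnt (pat u0 u1 u2 u3 u4 y y y y z) u3 = 4 then 1 else 0)
      + (if cnt (pat u0 u1 u2 u3 u4 y y y y z) u4 = 4 then 1 else 0))
      ≤ ((Wset (pat u0 u1 u2 u3 u4 y y y y z)).card : ℕ) := by
    rw [Wcard_pat, cy]
    norm_num
    omega
  have hpay : payf 0 (pat u0 u1 u2 u3 u4 y y y y z)
      = (((if cnt (pat u0 u1 u2 u3 u4 y y y y z) u0 = 4 then 1 else 0)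
      + (if cnt (pat u0 u1 u2 u3 u4 y y y y z) u1 = 4 then 1 else 0)
      + (if cnt (pat u0 u1 u2 u3 u4 y y y y z) u2 = 4 then 1 else 0)
      + (if cnt (pat u0 u1 u2 u3 u4 y y y y z) u3 = 4 then 1 else 0)
      + (if cnt (pat u0 u1 u2 u3 u4 y y y y z) u4 = 4 then 1 else 0) : ℕ) : ℝ)
      * (100 / ((Wset (pat u0 u1 u2 u3 u4 y y y y z)).card : ℝ)) := by
    rw [payf0_eq, bcu_eq, bcu_eq, bcu_eq, bcu_eq, bcu_eq, pat0, pat1, pat2, pat3, pat4]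
    push_cast
    split_ifs <;> ring
  rw [hpay]
  exact ratio_bound _ _ hK3 hWK

lemma largeOtherSum (u0 u1 u2 u3 u4 : Fin 100)
    (hn : ∀ p : Fin 100, nb u0 u1 u2 u3 u4 p ≠ 4) :
    ∑ y : Fin 100, ∑ z : Fin 100, payf 0 (pat u0 u1 u2 u3 u4 y y y y z) ≤ 499900 := by
  have hy : ∀ y : Fin 100, ∑ z : Fin 100, payf 0 (pat u0 u1 u2 u3 u4 y y y y z)
      ≤ if y ∈ ({u0, u1, u2, u3, u4} : Finset (Fin 100)) then 10000 else 4357 := by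
    intro y
    split_ifs with hmem
    · calc ∑ z : Fin 100, payf 0 (pat u0 u1 u2 u3 u4 y y y y z)
          ≤ ∑ _z : Fin 100, (100:ℝ) := Finset.sum_le_sum (fun z _ => payf_le_100 _ _)
        _ = 10000 := by rw [sum_const_100]; norm_num
    · simp only [Finset.mem_insert, Finset.mem_singleton, not_or] at hmem
      obtain ⟨n0, n1, n2, n3, n4⟩ := hmem
      calc ∑ z : Fin 100, payf 0 (pat u0 u1 u2 u3 u4 y y y y z)
          ≤ ∑ z : Fin 100, (if z = y then (100:ℝ) else 43) := by
            apply Finset.sum_le_sum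
            intro zz _
            split_ifs with hzz
            · exact payf_le_100 _ _
            · exact largeGood u0 u1 u2 u3 u4 y zz (fun h => n0 h.symm) (fun h => n1 h.symm)
                (fun h => n2 h.symm) (fun h => n3 h.symm) (fun h => n4 h.symm) hzz hn
        _ = 4357 := by rw [chain1]; norm_num
  calc ∑ y : Fin 100, ∑ z : Fin 100, payf 0 (pat u0 u1 u2 u3 u4 y y y y z)
      ≤ ∑ y : Fin 100, (if y ∈ ({u0, u1, u2, u3, u4} : Finset (Fin 100)) then (10000:ℝ) else 4357) :=
        Finset.sum_le_sum (fun y _ => hy y)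
    _ ≤ 499900 := by
      have hsplit : ∀ y : Fin 100, (if y ∈ ({u0, u1, u2, u3, u4} : Finset (Fin 100)) then (10000:ℝ) else 4357)
          = 4357 + (if y ∈ ({u0, u1, u2, u3, u4} : Finset (Fin 100)) then (5643:ℝ) else 0) := by
        intro y; split_ifs <;> norm_num
      rw [Finset.sum_congr rfl (fun y _ => hsplit y), Finset.sum_add_distrib, sum_const_100,
        Finset.sum_ite_mem, Finset.univ_inter, Finset.sum_const, nsmul_eq_mul]
      have h1 : ({u0, u1, u2, u3, u4} : Finset (Fin 100)).card ≤ 5 := by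
        have h4 : ({u3, u4} : Finset (Fin 100)).card ≤ 2 := by
          refine le_trans (Finset.card_insert_le _ _) ?_
          simp
        have h3 : ({u2, u3, u4} : Finset (Fin 100)).card ≤ 3 := by
          refine le_trans (Finset.card_insert_le _ _) ?_
          omega
        have h2 : ({u1, u2, u3, u4} : Finset (Fin 100)).card ≤ 4 := by
          refine le_trans (Finset.card_insert_le _ _) ?_
          omega
        refine le_trans (Finset.card_insert_le _ _) ?_
        omega
      have h1' : (({u0, u1, u2, u3, u4} : Finset (Fin 100)).card : ℝ) ≤ 5 := by exact_mod_cast h1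
      nlinarith [h1']

/-- classification when some value occurs exactly four times among the five large roles -/
lemma four_one (u0 u1 u2 u3 u4 v : Fin 100) (hv : nb u0 u1 u2 u3 u4 v = 4) :
    (u0 ≠ v ∧ u1 = v ∧ u2 = v ∧ u3 = v ∧ u4 = v) ∨
    (u0 = v ∧ u1 ≠ v ∧ u2 = v ∧ u3 = v ∧ u4 = v) ∨
    (u0 = v ∧ u1 = v ∧ u2 ≠ v ∧ u3 = v ∧ u4 = v) ∨
    (u0 = v ∧ u1 = v ∧ u2 = v ∧ u3 ≠ v ∧ u4 = v) ∨
    (u0 = v ∧ u1 = v ∧ u2 = v ∧ u3 = v ∧ u4 ≠ v) := by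
  by_cases h0 : u0 = v <;> by_cases h1 : u1 = v <;> by_cases h2 : u2 = v <;>
    by_cases h3 : u3 = v <;> by_cases h4 : u4 = v <;>
    simp [nb, h0, h1, h2, h3, h4] at hv ⊢ <;> tauto

lemma largeCore (u0 u1 u2 u3 u4 : Fin 100) :
    ∑ y : Fin 100, ∑ z : Fin 100, payf 0 (pat u0 u1 u2 u3 u4 y y y y z) ≤ 499900 := by
  by_cases hex : ∃ p : Fin 100, nb u0 u1 u2 u3 u4 p = 4
  · obtain ⟨v, hv⟩ := hex
    rcases four_one u0 u1 u2 u3 u4 v hv with ⟨h, e1, e2, e3, e4⟩ | ⟨e0, h, e2, e3, e4⟩ |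
      ⟨e0, e1, h, e3, e4⟩ | ⟨e0, e1, e2, h, e4⟩ | ⟨e0, e1, e2, e3, h⟩
    · rw [e1, e2, e3, e4]
      refine le_of_eq (largeFour u0 v v v v v u0 h ?_ ?_ (Or.inr rfl) (Or.inl rfl)
        (Or.inl rfl) (Or.inl rfl) (Or.inl rfl))
      · simp [nb, h]
      · simp [nb, Ne.symm h]
    · rw [e0, e2, e3, e4]
      refine le_of_eq (largeFour v u1 v v v v u1 h ?_ ?_ (Or.inl rfl) (Or.inr rfl)
        (Or.inl rfl) (Or.inl rfl) (Or.inl rfl))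
      · simp [nb, h]
      · simp [nb, Ne.symm h]
    · rw [e0, e1, e3, e4]
      refine le_of_eq (largeFour v v u2 v v v u2 h ?_ ?_ (Or.inl rfl) (Or.inl rfl)
        (Or.inr rfl) (Or.inl rfl) (Or.inl rfl))
      · simp [nb, h]
      · simp [nb, Ne.symm h]
    · rw [e0, e1, e2, e4]
      refine le_of_eq (largeFour v v v u3 v v u3 h ?_ ?_ (Or.inl rfl) (Or.inl rfl)
        (Or.inl rfl) (Or.inr rfl) (Or.inl rfl))
      · simp [nb, h]
      · simp [nb, Ne.symm h]
    · rw [e0, e1, e2, e3]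
      refine le_of_eq (largeFour v v v v u4 v u4 h ?_ ?_ (Or.inl rfl) (Or.inl rfl)
        (Or.inl rfl) (Or.inl rfl) (Or.inr rfl))
      · simp [nb, h]
      · simp [nb, Ne.symm h]
  · push_neg at hex
    exact largeOtherSum u0 u1 u2 u3 u4 hex

lemma Mixed.dirac_apply {α : Type} [Fintype α] [DecidableEq α] (a b : α) :
    (Mixed.dirac a).1 b = if b = a then 1 else 0 := rfl

lemma Mixed.sum_eq_one {α : Type} [Fintype α] (σ : Mixed α) : ∑ a, σ.1 a = 1 := σ.2.2

lemma Mixed.nonneg {α : Type} [Fintype α] (σ : Mixed α) (a : α) : 0 ≤ σ.1 a := σ.2.1 a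

lemma expPay_dirac (u : (∀ _ : Fin 10, Fin 100) → ℝ) (e : Fin 10 → Fin 100) :
    expPay u (fun r => Mixed.dirac (e r)) = u e := by
  rw [expPay, Finset.sum_eq_single e]
  · simp [Mixed.dirac_apply]
  · intro a _ hne
    have hex : ∃ r, a r ≠ e r := by
      by_contra hco; push_neg at hco; exact hne (funext hco)
    obtain ⟨r, hr⟩ := hex
    have hz : (∏ r', (Mixed.dirac (e r')).1 (a r')) = 0 :=
      Finset.prod_eq_zero (Finset.mem_univ r) (by simp [Mixed.dirac_apply, hr])
    rw [hz, zero_mul]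
  · intro h; exact absurd (Finset.mem_univ e) h

lemma expPay_peel (u : (∀ _ : Fin 10, Fin 100) → ℝ) (σ : ∀ _ : Fin 10, Mixed (Fin 100))
    (r0 : Fin 10) :
    expPay u σ = ∑ v : Fin 100, (σ r0).1 v * expPay u (Function.update σ r0 (Mixed.dirac v)) := by
  simp only [expPay, Finset.mul_sum]
  rw [Finset.sum_comm]
  apply Finset.sum_congr rfl
  intro a _
  have hsplit : ∀ v : Fin 100, (∏ r, (Function.update σ r0 (Mixed.dirac v) r).1 (a r))
      = (if a r0 = v then 1 else 0) * ∏ r ∈ Finset.univ.erase r0, (σ r).1 (a r) := by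
    intro v
    rw [← Finset.mul_prod_erase Finset.univ
      (fun r => (Function.update σ r0 (Mixed.dirac v) r).1 (a r)) (Finset.mem_univ r0)]
    congr 1
    · simp [Mixed.dirac_apply]
    · apply Finset.prod_congr rfl
      intro r hr
      rw [Function.update_of_ne (Finset.ne_of_mem_erase hr)]
  have e : ∀ v : Fin 100, (σ r0).1 v * ((∏ r, (Function.update σ r0 (Mixed.dirac v) r).1 (a r)) * u a)
      = if a r0 = v then (σ r0).1 v * ((∏ r ∈ Finset.univ.erase r0, (σ r).1 (a r)) * u a) else 0 := by
    intro v
    rw [hsplit v]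
    split_ifs <;> ring
  rw [Finset.sum_congr rfl (fun v _ => e v), Finset.sum_ite_eq Finset.univ (a r0)]
  rw [← Finset.mul_prod_erase Finset.univ (fun r => (σ r).1 (a r)) (Finset.mem_univ r0)]
  simp [mul_assoc]

lemma dirac_inj : Function.Injective (Mixed.dirac : Fin 100 → Mixed (Fin 100)) := by
  intro a b h
  have h2 := congrArg (fun σ : Mixed (Fin 100) => σ.1 a) h
  simp only [Mixed.dirac_apply, if_pos rfl] at h2
  by_contra hne
  rw [if_neg hne] at h2
  norm_num at h2

lemma largePure_inj : Function.Injective largePure := by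
  intro a b h
  have h2 := congrArg (fun M => M 0) h
  simp only [largePure] at h2
  norm_num at h2
  exact dirac_inj h2

lemma constPure_inj : Function.Injective constPure := by
  intro a b h
  exact dirac_inj (congrArg (fun M => M 0) h)

lemma FinDist.sum_uniform {P : Type} (D : FinDist P) (φ : Fin 100 → P)
    (hinj : Function.Injective φ) (hw : ∀ x, D.w (φ x) = 1/100) (f : P → ℝ) :
    ∑ m ∈ D.support, D.w m * f m = ∑ x : Fin 100, (1/100) * f (φ x) := by
  classical
  set T : Finset P := Finset.univ.image φ with hT
  have hsub : T ⊆ D.support := by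
    intro m hm
    rw [hT, Finset.mem_image] at hm
    obtain ⟨x, _, rfl⟩ := hm
    by_contra hns
    have h0 := D.zero_of_not_mem _ hns
    rw [hw x] at h0; norm_num at h0
  have hTsum : ∑ m ∈ T, D.w m = 1 := by
    rw [hT, Finset.sum_image (fun a _ b _ h => hinj h)]
    rw [Finset.sum_congr rfl (fun x _ => hw x)]
    rw [Finset.sum_const, Finset.card_univ]
    norm_num
  have hsplitsum := D.sum_one
  rw [← Finset.sum_sdiff hsub] at hsplitsum
  have hrest : ∀ m ∈ D.support \ T, D.w m = 0 := by
    have hz : ∑ m ∈ D.support \ T, D.w m = 0 := by linarith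
    exact fun m hm => (Finset.sum_eq_zero_iff_of_nonneg (fun m _ => D.nonneg m)).1 hz m hm
  calc ∑ m ∈ D.support, D.w m * f m
      = ∑ m ∈ D.support \ T, D.w m * f m + ∑ m ∈ T, D.w m * f m := by
        rw [Finset.sum_sdiff hsub]
    _ = ∑ m ∈ T, D.w m * f m := by
        rw [Finset.sum_eq_zero (fun m hm => by rw [hrest m hm, zero_mul]), zero_add]
    _ = ∑ x : Fin 100, (1/100) * f (φ x) := by
        rw [hT, Finset.sum_image (fun a _ b _ h => hinj h)]
        exact Finset.sum_congr rfl (fun x _ => by rw [hw x])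

lemma sum_piFinset_three {β : Type} (S : Fin 3 → Finset β)
    (f : (Fin 3 → β) → ℝ) :
    ∑ M ∈ Fintype.piFinset S, f M = ∑ a ∈ S 0, ∑ b ∈ S 1, ∑ c ∈ S 2, f ![a, b, c] := by
  classical
  rw [← Finset.sum_product', ← Finset.sum_product']
  apply Finset.sum_nbij' (i := fun M => ((M 0, M 1), M 2))
    (j := fun p => ![p.1.1, p.1.2, p.2])
  · intro M hM
    rw [Fintype.mem_piFinset] at hM
    simp [Finset.mem_product, hM 0, hM 1, hM 2]
  · intro p hp
    simp only [Finset.mem_product] at hp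
    rw [Fintype.mem_piFinset]
    intro j
    fin_cases j
    · exact hp.1.1
    · exact hp.1.2
    · exact hp.2
  · intro M _
    funext r
    fin_cases r <;> rfl
  · intro p _
    rfl
  · intro M _
    congr 1
    funext r
    fin_cases r <;> rfl

lemma prod_univ_ten (f : Fin 10 → ℝ) :
    ∏ i, f i = f 0 * f 1 * f 2 * f 3 * f 4 * f 5 * f 6 * f 7 * f 8 * f 9 := by
  have h : ∏ i, f i = f 0 * (f 1 * (f 2 * (f 3 * (f 4 * (f 5 * (f 6 * (f 7 * (f 8 * (f 9 * 1))))))))) := rfl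
  rw [h]; ring

lemma gstar0 : gstar 0 = 0 := rfl
lemma gstar5 : gstar 5 = 1 := rfl
lemma gstar9 : gstar 9 = 2 := rfl

lemma bcp_prod_star : ∏ r, bcp r (gstar r) = 1 := by
  rw [prod_univ_ten]
  norm_num [bcp, gstar, show ((0:Fin 10):ℕ) = 0 from rfl, show ((1:Fin 10):ℕ) = 1 from rfl,
    show ((2:Fin 10):ℕ) = 2 from rfl, show ((3:Fin 10):ℕ) = 3 from rfl,
    show ((4:Fin 10):ℕ) = 4 from rfl, show ((5:Fin 10):ℕ) = 5 from rfl,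
    show ((6:Fin 10):ℕ) = 6 from rfl, show ((7:Fin 10):ℕ) = 7 from rfl,
    show ((8:Fin 10):ℕ) = 8 from rfl, show ((9:Fin 10):ℕ) = 9 from rfl,
    (by decide : ¬ ((2:Fin 3) = 0)), (by decide : ¬ ((2:Fin 3) = 1)),
    (by decide : ¬ ((1:Fin 3) = 0))]

lemma bcp_zero (r : Fin 10) (t : Fin 3) (h : t ≠ gstar r) : bcp r t = 0 := by
  fin_cases r <;> fin_cases t <;>
    simp_all [bcp, gstar] <;> norm_num

lemma bcp_prod_ne (g : Fin 10 → Fin 3) (hg : g ≠ gstar) : ∏ r, bcp r (g r) = 0 := by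
  have hex : ∃ r, g r ≠ gstar r := by
    by_contra hco; push_neg at hco; exact hg (funext hco)
  obtain ⟨r, hr⟩ := hex
  exact Finset.prod_eq_zero (Finset.mem_univ r) (bcp_zero r (g r) hr)

lemma Upure_eq (j : Fin 3) (M : Fin 3 → PureMeta (fun _ : Fin 10 => Fin 100)) :
    Upure bcu bcp j M = expPay (payf j) (fun r => M (gstar r) r) := by
  rw [Upure]
  have hinner : ∀ i : Fin 10,
      (∑ g : Fin 10 → Fin 3, if g i = j then (∏ r, bcp r (g r)) * expPay (bcu i) (fun r => M (g r) r) else 0)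
      = if gstar i = j then expPay (bcu i) (fun r => M (gstar r) r) else 0 := by
    intro i
    rw [Finset.sum_eq_single gstar]
    · rw [bcp_prod_star, one_mul]
    · intro g _ hg
      rw [bcp_prod_ne g hg, zero_mul]
      split <;> rfl
    · intro h; exact absurd (Finset.mem_univ _) h
  rw [Finset.sum_congr rfl (fun i _ => hinner i)]
  have e : ∀ i : Fin 10, (if gstar i = j then expPay (bcu i) (fun r => M (gstar r) r) else 0)
      = ∑ a : ∀ _ : Fin 10, Fin 100,
          (∏ r, (M (gstar r) r).1 (a r)) * (if gstar i = j then bcu i a else 0) := by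
    intro i
    split_ifs with h
    · rw [expPay]
    · simp
  rw [Finset.sum_congr rfl (fun i _ => e i), Finset.sum_comm, expPay]
  apply Finset.sum_congr rfl
  intro a _
  rw [payf, Finset.mul_sum]

noncomputable def hybL (y z : Fin 100) (s0 s1 s2 s3 s4 : Mixed (Fin 100)) :
    ∀ _ : Fin 10, Mixed (Fin 100) :=
  ![s0, s1, s2, s3, s4, Mixed.dirac y, Mixed.dirac y, Mixed.dirac y, Mixed.dirac y, Mixed.dirac z]

noncomputable def hybM (x z : Fin 100) (s5 s6 s7 s8 : Mixed (Fin 100)) :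
    ∀ _ : Fin 10, Mixed (Fin 100) :=
  ![Mixed.dirac x, Mixed.dirac x, Mixed.dirac x, Mixed.dirac x, Mixed.dirac (x+1),
    s5, s6, s7, s8, Mixed.dirac z]

noncomputable def hybS (x y : Fin 100) (s9 : Mixed (Fin 100)) :
    ∀ _ : Fin 10, Mixed (Fin 100) :=
  ![Mixed.dirac x, Mixed.dirac x, Mixed.dirac x, Mixed.dirac x, Mixed.dirac (x+1),
    Mixed.dirac y, Mixed.dirac y, Mixed.dirac y, Mixed.dirac y, s9]

lemma profL (y z : Fin 100) (m : PureMeta (fun _ : Fin 10 => Fin 100)) :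
    (fun r => (![m, constPure y, constPure z] : Fin 3 → PureMeta (fun _ : Fin 10 => Fin 100)) (gstar r) r)
    = hybL y z (m 0) (m 1) (m 2) (m 3) (m 4) := by
  funext r; fin_cases r <;> rfl

lemma profM (x z : Fin 100) (m : PureMeta (fun _ : Fin 10 => Fin 100)) :
    (fun r => (![largePure x, m, constPure z] : Fin 3 → PureMeta (fun _ : Fin 10 => Fin 100)) (gstar r) r)
    = hybM x z (m 5) (m 6) (m 7) (m 8) := by
  funext r; fin_cases r <;> rfl

lemma profS (x y : Fin 100) (m : PureMeta (fun _ : Fin 10 => Fin 100)) :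
    (fun r => (![largePure x, constPure y, m] : Fin 3 → PureMeta (fun _ : Fin 10 => Fin 100)) (gstar r) r)
    = hybS x y (m 9) := by
  funext r; fin_cases r <;> rfl

lemma profEq (x y z : Fin 100) :
    (fun r => (![largePure x, constPure y, constPure z] : Fin 3 → PureMeta (fun _ : Fin 10 => Fin 100)) (gstar r) r)
    = fun r => Mixed.dirac (pat x x x x (x+1) y y y y z r) := by
  funext r; fin_cases r <;> rfl

lemma hybL_dirac (y z q0 q1 q2 q3 q4 : Fin 100) :
    hybL y z (Mixed.dirac q0) (Mixed.dirac q1) (Mixed.dirac q2) (Mixed.dirac q3) (Mixed.dirac q4)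
    = fun r => Mixed.dirac (pat q0 q1 q2 q3 q4 y y y y z r) := by
  funext r; fin_cases r <;> rfl

lemma hybM_dirac (x z q5 q6 q7 q8 : Fin 100) :
    hybM x z (Mixed.dirac q5) (Mixed.dirac q6) (Mixed.dirac q7) (Mixed.dirac q8)
    = fun r => Mixed.dirac (pat x x x x (x+1) q5 q6 q7 q8 z r) := by
  funext r; fin_cases r <;> rfl

lemma hybS_dirac (x y q9 : Fin 100) :
    hybS x y (Mixed.dirac q9)
    = fun r => Mixed.dirac (pat x x x x (x+1) y y y y q9 r) := by
  funext r; fin_cases r <;> rfl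

-- update lemmas
lemma updL0 (y z : Fin 100) (s0 s1 s2 s3 s4 t : Mixed (Fin 100)) :
    Function.update (hybL y z s0 s1 s2 s3 s4) 0 t = hybL y z t s1 s2 s3 s4 := by
  funext r; fin_cases r <;> rfl
lemma updL1 (y z : Fin 100) (s0 s1 s2 s3 s4 t : Mixed (Fin 100)) :
    Function.update (hybL y z s0 s1 s2 s3 s4) 1 t = hybL y z s0 t s2 s3 s4 := by
  funext r; fin_cases r <;> rfl
lemma updL2 (y z : Fin 100) (s0 s1 s2 s3 s4 t : Mixed (Fin 100)) :
    Function.update (hybL y z s0 s1 s2 s3 s4) 2 t = hybL y z s0 s1 t s3 s4 := by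
  funext r; fin_cases r <;> rfl
lemma updL3 (y z : Fin 100) (s0 s1 s2 s3 s4 t : Mixed (Fin 100)) :
    Function.update (hybL y z s0 s1 s2 s3 s4) 3 t = hybL y z s0 s1 s2 t s4 := by
  funext r; fin_cases r <;> rfl
lemma updL4 (y z : Fin 100) (s0 s1 s2 s3 s4 t : Mixed (Fin 100)) :
    Function.update (hybL y z s0 s1 s2 s3 s4) 4 t = hybL y z s0 s1 s2 s3 t := by
  funext r; fin_cases r <;> rfl
lemma updM5 (x z : Fin 100) (s5 s6 s7 s8 t : Mixed (Fin 100)) :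
    Function.update (hybM x z s5 s6 s7 s8) 5 t = hybM x z t s6 s7 s8 := by
  funext r; fin_cases r <;> rfl
lemma updM6 (x z : Fin 100) (s5 s6 s7 s8 t : Mixed (Fin 100)) :
    Function.update (hybM x z s5 s6 s7 s8) 6 t = hybM x z s5 t s7 s8 := by
  funext r; fin_cases r <;> rfl
lemma updM7 (x z : Fin 100) (s5 s6 s7 s8 t : Mixed (Fin 100)) :
    Function.update (hybM x z s5 s6 s7 s8) 7 t = hybM x z s5 s6 t s8 := by
  funext r; fin_cases r <;> rfl
lemma updM8 (x z : Fin 100) (s5 s6 s7 s8 t : Mixed (Fin 100)) :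
    Function.update (hybM x z s5 s6 s7 s8) 8 t = hybM x z s5 s6 s7 t := by
  funext r; fin_cases r <;> rfl
lemma updS9 (x y : Fin 100) (s9 t : Mixed (Fin 100)) :
    Function.update (hybS x y s9) 9 t = hybS x y t := by
  funext r; fin_cases r <;> rfl

-- vector component evaluations
lemma hybL_at0 (y z : Fin 100) (s0 s1 s2 s3 s4 : Mixed (Fin 100)) : hybL y z s0 s1 s2 s3 s4 0 = s0 := rfl
lemma hybL_at1 (y z : Fin 100) (s0 s1 s2 s3 s4 : Mixed (Fin 100)) : hybL y z s0 s1 s2 s3 s4 1 = s1 := rfl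
lemma hybL_at2 (y z : Fin 100) (s0 s1 s2 s3 s4 : Mixed (Fin 100)) : hybL y z s0 s1 s2 s3 s4 2 = s2 := rfl
lemma hybL_at3 (y z : Fin 100) (s0 s1 s2 s3 s4 : Mixed (Fin 100)) : hybL y z s0 s1 s2 s3 s4 3 = s3 := rfl
lemma hybL_at4 (y z : Fin 100) (s0 s1 s2 s3 s4 : Mixed (Fin 100)) : hybL y z s0 s1 s2 s3 s4 4 = s4 := rfl
lemma hybM_at5 (x z : Fin 100) (s5 s6 s7 s8 : Mixed (Fin 100)) : hybM x z s5 s6 s7 s8 5 = s5 := rfl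
lemma hybM_at6 (x z : Fin 100) (s5 s6 s7 s8 : Mixed (Fin 100)) : hybM x z s5 s6 s7 s8 6 = s6 := rfl
lemma hybM_at7 (x z : Fin 100) (s5 s6 s7 s8 : Mixed (Fin 100)) : hybM x z s5 s6 s7 s8 7 = s7 := rfl
lemma hybM_at8 (x z : Fin 100) (s5 s6 s7 s8 : Mixed (Fin 100)) : hybM x z s5 s6 s7 s8 8 = s8 := rfl
lemma hybS_at9 (x y : Fin 100) (s9 : Mixed (Fin 100)) : hybS x y s9 9 = s9 := rfl

lemma swap_sum3 (w : Fin 100 → ℝ) (F : Fin 100 → Fin 100 → Fin 100 → ℝ) :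
    (∑ x : Fin 100, ∑ z : Fin 100, ∑ q : Fin 100, w q * F x z q)
    = ∑ q : Fin 100, w q * ∑ x : Fin 100, ∑ z : Fin 100, F x z q := by
  have h1 : (∑ x : Fin 100, ∑ z : Fin 100, ∑ q : Fin 100, w q * F x z q)
      = ∑ x : Fin 100, ∑ q : Fin 100, ∑ z : Fin 100, w q * F x z q :=
    Finset.sum_congr rfl (fun x _ => Finset.sum_comm)
  rw [h1, Finset.sum_comm]
  apply Finset.sum_congr rfl
  intro q _
  simp [Finset.mul_sum]

lemma mixed_bound (σ : Mixed (Fin 100)) (f : Fin 100 → ℝ) (C : ℝ)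
    (h : ∀ v, f v ≤ C) : ∑ v, σ.1 v * f v ≤ C := by
  calc ∑ v, σ.1 v * f v ≤ ∑ v, σ.1 v * C :=
        Finset.sum_le_sum (fun v _ => mul_le_mul_of_nonneg_left (h v) (σ.nonneg v))
    _ = C := by rw [← Finset.sum_mul, σ.sum_eq_one, one_mul]

-- medium LLM : mixed deviation bound
lemma key4M (q5 q6 q7 q8 : Fin 100) :
    (∑ x : Fin 100, ∑ z : Fin 100,
      expPay (payf 1) (hybM x z (Mixed.dirac q5) (Mixed.dirac q6) (Mixed.dirac q7) (Mixed.dirac q8)))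
    ≤ 490000 := by
  have h : ∀ x z : Fin 100,
      expPay (payf 1) (hybM x z (Mixed.dirac q5) (Mixed.dirac q6) (Mixed.dirac q7) (Mixed.dirac q8))
      = payf 1 (pat x x x x (x+1) q5 q6 q7 q8 z) := by
    intro x z
    rw [hybM_dirac, expPay_dirac]
  rw [Finset.sum_congr rfl (fun x _ => Finset.sum_congr rfl (fun z _ => h x z))]
  exact medCore q5 q6 q7 q8

lemma key3M (q5 q6 q7 : Fin 100) (s8 : Mixed (Fin 100)) :
    (∑ x : Fin 100, ∑ z : Fin 100,
      expPay (payf 1) (hybM x z (Mixed.dirac q5) (Mixed.dirac q6) (Mixed.dirac q7) s8))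
    ≤ 490000 := by
  have h : ∀ x z : Fin 100,
      expPay (payf 1) (hybM x z (Mixed.dirac q5) (Mixed.dirac q6) (Mixed.dirac q7) s8)
      = ∑ v : Fin 100, s8.1 v *
          expPay (payf 1) (hybM x z (Mixed.dirac q5) (Mixed.dirac q6) (Mixed.dirac q7) (Mixed.dirac v)) := by
    intro x z
    rw [expPay_peel (payf 1) _ 8]
    apply Finset.sum_congr rfl
    intro v _
    rw [hybM_at8, updM8]
  rw [Finset.sum_congr rfl (fun x _ => Finset.sum_congr rfl (fun z _ => h x z)), swap_sum3]
  exact mixed_bound s8 _ _ (fun v => key4M q5 q6 q7 v)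

lemma key2M (q5 q6 : Fin 100) (s7 s8 : Mixed (Fin 100)) :
    (∑ x : Fin 100, ∑ z : Fin 100,
      expPay (payf 1) (hybM x z (Mixed.dirac q5) (Mixed.dirac q6) s7 s8)) ≤ 490000 := by
  have h : ∀ x z : Fin 100,
      expPay (payf 1) (hybM x z (Mixed.dirac q5) (Mixed.dirac q6) s7 s8)
      = ∑ v : Fin 100, s7.1 v *
          expPay (payf 1) (hybM x z (Mixed.dirac q5) (Mixed.dirac q6) (Mixed.dirac v) s8) := by
    intro x z
    rw [expPay_peel (payf 1) _ 7]
    apply Finset.sum_congr rfl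
    intro v _
    rw [hybM_at7, updM7]
  rw [Finset.sum_congr rfl (fun x _ => Finset.sum_congr rfl (fun z _ => h x z)), swap_sum3]
  exact mixed_bound s7 _ _ (fun v => key3M q5 q6 v s8)

lemma key1M (q5 : Fin 100) (s6 s7 s8 : Mixed (Fin 100)) :
    (∑ x : Fin 100, ∑ z : Fin 100,
      expPay (payf 1) (hybM x z (Mixed.dirac q5) s6 s7 s8)) ≤ 490000 := by
  have h : ∀ x z : Fin 100,
      expPay (payf 1) (hybM x z (Mixed.dirac q5) s6 s7 s8)
      = ∑ v : Fin 100, s6.1 v *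
          expPay (payf 1) (hybM x z (Mixed.dirac q5) (Mixed.dirac v) s7 s8) := by
    intro x z
    rw [expPay_peel (payf 1) _ 6]
    apply Finset.sum_congr rfl
    intro v _
    rw [hybM_at6, updM6]
  rw [Finset.sum_congr rfl (fun x _ => Finset.sum_congr rfl (fun z _ => h x z)), swap_sum3]
  exact mixed_bound s6 _ _ (fun v => key2M q5 v s7 s8)

lemma keyM (s5 s6 s7 s8 : Mixed (Fin 100)) :
    (∑ x : Fin 100, ∑ z : Fin 100, expPay (payf 1) (hybM x z s5 s6 s7 s8)) ≤ 490000 := by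
  have h : ∀ x z : Fin 100,
      expPay (payf 1) (hybM x z s5 s6 s7 s8)
      = ∑ v : Fin 100, s5.1 v * expPay (payf 1) (hybM x z (Mixed.dirac v) s6 s7 s8) := by
    intro x z
    rw [expPay_peel (payf 1) _ 5]
    apply Finset.sum_congr rfl
    intro v _
    rw [hybM_at5, updM5]
  rw [Finset.sum_congr rfl (fun x _ => Finset.sum_congr rfl (fun z _ => h x z)), swap_sum3]
  exact mixed_bound s5 _ _ (fun v => key1M v s6 s7 s8)

-- large LLM
lemma key5L (q0 q1 q2 q3 q4 : Fin 100) :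
    (∑ y : Fin 100, ∑ z : Fin 100,
      expPay (payf 0) (hybL y z (Mixed.dirac q0) (Mixed.dirac q1) (Mixed.dirac q2)
        (Mixed.dirac q3) (Mixed.dirac q4))) ≤ 499900 := by
  have h : ∀ y z : Fin 100,
      expPay (payf 0) (hybL y z (Mixed.dirac q0) (Mixed.dirac q1) (Mixed.dirac q2)
        (Mixed.dirac q3) (Mixed.dirac q4))
      = payf 0 (pat q0 q1 q2 q3 q4 y y y y z) := by
    intro y z
    rw [hybL_dirac, expPay_dirac]
  rw [Finset.sum_congr rfl (fun y _ => Finset.sum_congr rfl (fun z _ => h y z))]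
  exact largeCore q0 q1 q2 q3 q4

lemma key4L (q0 q1 q2 q3 : Fin 100) (s4 : Mixed (Fin 100)) :
    (∑ y : Fin 100, ∑ z : Fin 100,
      expPay (payf 0) (hybL y z (Mixed.dirac q0) (Mixed.dirac q1) (Mixed.dirac q2)
        (Mixed.dirac q3) s4)) ≤ 499900 := by
  have h : ∀ y z : Fin 100,
      expPay (payf 0) (hybL y z (Mixed.dirac q0) (Mixed.dirac q1) (Mixed.dirac q2) (Mixed.dirac q3) s4)
      = ∑ v : Fin 100, s4.1 v *
          expPay (payf 0) (hybL y z (Mixed.dirac q0) (Mixed.dirac q1) (Mixed.dirac q2)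
            (Mixed.dirac q3) (Mixed.dirac v)) := by
    intro y z
    rw [expPay_peel (payf 0) _ 4]
    apply Finset.sum_congr rfl
    intro v _
    rw [hybL_at4, updL4]
  rw [Finset.sum_congr rfl (fun y _ => Finset.sum_congr rfl (fun z _ => h y z)), swap_sum3]
  exact mixed_bound s4 _ _ (fun v => key5L q0 q1 q2 q3 v)

lemma key3L (q0 q1 q2 : Fin 100) (s3 s4 : Mixed (Fin 100)) :
    (∑ y : Fin 100, ∑ z : Fin 100,
      expPay (payf 0) (hybL y z (Mixed.dirac q0) (Mixed.dirac q1) (Mixed.dirac q2) s3 s4)) ≤ 499900 := by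
  have h : ∀ y z : Fin 100,
      expPay (payf 0) (hybL y z (Mixed.dirac q0) (Mixed.dirac q1) (Mixed.dirac q2) s3 s4)
      = ∑ v : Fin 100, s3.1 v *
          expPay (payf 0) (hybL y z (Mixed.dirac q0) (Mixed.dirac q1) (Mixed.dirac q2) (Mixed.dirac v) s4) := by
    intro y z
    rw [expPay_peel (payf 0) _ 3]
    apply Finset.sum_congr rfl
    intro v _
    rw [hybL_at3, updL3]
  rw [Finset.sum_congr rfl (fun y _ => Finset.sum_congr rfl (fun z _ => h y z)), swap_sum3]
  exact mixed_bound s3 _ _ (fun v => key4L q0 q1 q2 v s4)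

lemma key2L (q0 q1 : Fin 100) (s2 s3 s4 : Mixed (Fin 100)) :
    (∑ y : Fin 100, ∑ z : Fin 100,
      expPay (payf 0) (hybL y z (Mixed.dirac q0) (Mixed.dirac q1) s2 s3 s4)) ≤ 499900 := by
  have h : ∀ y z : Fin 100,
      expPay (payf 0) (hybL y z (Mixed.dirac q0) (Mixed.dirac q1) s2 s3 s4)
      = ∑ v : Fin 100, s2.1 v *
          expPay (payf 0) (hybL y z (Mixed.dirac q0) (Mixed.dirac q1) (Mixed.dirac v) s3 s4) := by
    intro y z
    rw [expPay_peel (payf 0) _ 2]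
    apply Finset.sum_congr rfl
    intro v _
    rw [hybL_at2, updL2]
  rw [Finset.sum_congr rfl (fun y _ => Finset.sum_congr rfl (fun z _ => h y z)), swap_sum3]
  exact mixed_bound s2 _ _ (fun v => key3L q0 q1 v s3 s4)

lemma key1L (q0 : Fin 100) (s1 s2 s3 s4 : Mixed (Fin 100)) :
    (∑ y : Fin 100, ∑ z : Fin 100,
      expPay (payf 0) (hybL y z (Mixed.dirac q0) s1 s2 s3 s4)) ≤ 499900 := by
  have h : ∀ y z : Fin 100,
      expPay (payf 0) (hybL y z (Mixed.dirac q0) s1 s2 s3 s4)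
      = ∑ v : Fin 100, s1.1 v *
          expPay (payf 0) (hybL y z (Mixed.dirac q0) (Mixed.dirac v) s2 s3 s4) := by
    intro y z
    rw [expPay_peel (payf 0) _ 1]
    apply Finset.sum_congr rfl
    intro v _
    rw [hybL_at1, updL1]
  rw [Finset.sum_congr rfl (fun y _ => Finset.sum_congr rfl (fun z _ => h y z)), swap_sum3]
  exact mixed_bound s1 _ _ (fun v => key2L q0 v s2 s3 s4)

lemma keyL (s0 s1 s2 s3 s4 : Mixed (Fin 100)) :
    (∑ y : Fin 100, ∑ z : Fin 100, expPay (payf 0) (hybL y z s0 s1 s2 s3 s4)) ≤ 499900 := by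
  have h : ∀ y z : Fin 100,
      expPay (payf 0) (hybL y z s0 s1 s2 s3 s4)
      = ∑ v : Fin 100, s0.1 v *
          expPay (payf 0) (hybL y z (Mixed.dirac v) s1 s2 s3 s4) := by
    intro y z
    rw [expPay_peel (payf 0) _ 0]
    apply Finset.sum_congr rfl
    intro v _
    rw [hybL_at0, updL0]
  rw [Finset.sum_congr rfl (fun y _ => Finset.sum_congr rfl (fun z _ => h y z)), swap_sum3]
  exact mixed_bound s0 _ _ (fun v => key1L v s1 s2 s3 s4)

-- small LLM
lemma keyS (s9 : Mixed (Fin 100)) :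
    (∑ x : Fin 100, ∑ y : Fin 100, expPay (payf 2) (hybS x y s9)) ≤ 0 := by
  have h : ∀ x y : Fin 100,
      expPay (payf 2) (hybS x y s9)
      = ∑ v : Fin 100, s9.1 v * expPay (payf 2) (hybS x y (Mixed.dirac v)) := by
    intro x y
    rw [expPay_peel (payf 2) _ 9]
    apply Finset.sum_congr rfl
    intro v _
    rw [hybS_at9, updS9]
  rw [Finset.sum_congr rfl (fun x _ => Finset.sum_congr rfl (fun y _ => h x y)), swap_sum3]
  have hz : ∀ v : Fin 100, (∑ x : Fin 100, ∑ y : Fin 100, expPay (payf 2) (hybS x y (Mixed.dirac v))) ≤ 0 := by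
    intro v
    have h0 : ∀ x y : Fin 100, expPay (payf 2) (hybS x y (Mixed.dirac v)) = 0 := by
      intro x y
      rw [hybS_dirac, expPay_dirac]
      exact pay2_zero x y v
    rw [Finset.sum_congr rfl (fun x _ => Finset.sum_eq_zero (fun y _ => h0 x y))]
    simp
  exact mixed_bound s9 _ _ hz

lemma U_eq (Γ : Fin 3 → FinDist (PureMeta (fun _ : Fin 10 => Fin 100))) (j : Fin 3) :
    U bcu bcp Γ j = ∑ a ∈ (Γ 0).support, (Γ 0).w a *
      (∑ b ∈ (Γ 1).support, (Γ 1).w b * (∑ c ∈ (Γ 2).support, (Γ 2).w c *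
        Upure bcu bcp j ![a, b, c])) := by
  rw [U, sum_piFinset_three (fun j' => (Γ j').support)
    (f := fun M => (∏ j', (Γ j').w (M j')) * Upure bcu bcp j M)]
  simp only [Finset.mul_sum]
  apply Finset.sum_congr rfl; intro a _
  apply Finset.sum_congr rfl; intro b _
  apply Finset.sum_congr rfl; intro c _
  rw [Fin.prod_univ_three]
  have e0 : (![a, b, c] : Fin 3 → PureMeta (fun _ : Fin 10 => Fin 100)) 0 = a := rfl
  have e1 : (![a, b, c] : Fin 3 → PureMeta (fun _ : Fin 10 => Fin 100)) 1 = b := rfl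
  have e2 : (![a, b, c] : Fin 3 → PureMeta (fun _ : Fin 10 => Fin 100)) 2 = c := rfl
  rw [e0, e1, e2]
  ring

lemma Upure_pat (j : Fin 3) (x y z : Fin 100) :
    Upure bcu bcp j ![largePure x, constPure y, constPure z]
    = payf j (pat x x x x (x+1) y y y y z) := by
  rw [Upure_eq, profEq, expPay_dirac]

lemma pull3 (c : ℝ) (F : Fin 100 → Fin 100 → Fin 100 → ℝ) :
    (∑ x : Fin 100, c * (∑ y : Fin 100, c * (∑ z : Fin 100, c * F x y z)))
    = c^3 * ∑ x : Fin 100, ∑ y : Fin 100, ∑ z : Fin 100, F x y z := by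
  simp only [Finset.mul_sum]
  apply Finset.sum_congr rfl; intro x _
  apply Finset.sum_congr rfl; intro y _
  apply Finset.sum_congr rfl; intro z _
  ring

lemma U_unif (Γ : Fin 3 → FinDist (PureMeta (fun _ : Fin 10 => Fin 100)))
    (hL : ∀ x : Fin 100, (Γ 0).w (largePure x) = 1 / 100)
    (hM : ∀ y : Fin 100, (Γ 1).w (constPure y) = 1 / 100)
    (hS : ∀ z : Fin 100, (Γ 2).w (constPure z) = 1 / 100) (j : Fin 3) :
    U bcu bcp Γ j = (1/100 : ℝ)^3 *
      ∑ x : Fin 100, ∑ y : Fin 100, ∑ z : Fin 100, payf j (pat x x x x (x+1) y y y y z) := by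
  rw [U_eq, FinDist.sum_uniform (Γ 0) largePure largePure_inj hL]
  have h1 : ∀ x : Fin 100,
      (∑ b ∈ (Γ 1).support, (Γ 1).w b * (∑ c ∈ (Γ 2).support, (Γ 2).w c *
        Upure bcu bcp j ![largePure x, b, c]))
      = ∑ y : Fin 100, (1/100 : ℝ) * (∑ z : Fin 100, (1/100 : ℝ) *
          payf j (pat x x x x (x+1) y y y y z)) := by
    intro x
    rw [FinDist.sum_uniform (Γ 1) constPure constPure_inj hM]
    apply Finset.sum_congr rfl; intro y _
    congr 1
    rw [FinDist.sum_uniform (Γ 2) constPure constPure_inj hS]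
    apply Finset.sum_congr rfl; intro z _
    rw [Upure_pat]
  rw [Finset.sum_congr rfl (fun x _ => by rw [h1 x]), pull3]

lemma U_val0 (Γ : Fin 3 → FinDist (PureMeta (fun _ : Fin 10 => Fin 100)))
    (hL : ∀ x : Fin 100, (Γ 0).w (largePure x) = 1 / 100)
    (hM : ∀ y : Fin 100, (Γ 1).w (constPure y) = 1 / 100)
    (hS : ∀ z : Fin 100, (Γ 2).w (constPure z) = 1 / 100) :
    U bcu bcp Γ 0 = 49.99 := by
  rw [U_unif Γ hL hM hS 0]
  have h : ∀ x : Fin 100, ∑ y : Fin 100, ∑ z : Fin 100,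
      payf 0 (pat x x x x (x+1) y y y y z) = 499900 := by
    intro x
    exact largeFour x x x x (x+1) x (x+1) (succ_ne x)
      (by simp [nb, succ_ne x]) (by simp [nb, Ne.symm (succ_ne x)])
      (Or.inl rfl) (Or.inl rfl) (Or.inl rfl) (Or.inl rfl) (Or.inr rfl)
  rw [Finset.sum_congr rfl (fun x _ => h x), Finset.sum_const, Finset.card_univ]
  norm_num

lemma U_val1 (Γ : Fin 3 → FinDist (PureMeta (fun _ : Fin 10 => Fin 100)))
    (hL : ∀ x : Fin 100, (Γ 0).w (largePure x) = 1 / 100)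
    (hM : ∀ y : Fin 100, (Γ 1).w (constPure y) = 1 / 100)
    (hS : ∀ z : Fin 100, (Γ 2).w (constPure z) = 1 / 100) :
    U bcu bcp Γ 1 = 49 := by
  rw [U_unif Γ hL hM hS 1]
  have hswap : (∑ x : Fin 100, ∑ y : Fin 100, ∑ z : Fin 100,
      payf 1 (pat x x x x (x+1) y y y y z))
      = ∑ y : Fin 100, ∑ x : Fin 100, ∑ z : Fin 100, payf 1 (pat x x x x (x+1) y y y y z) :=
    Finset.sum_comm
  rw [hswap, Finset.sum_congr rfl (fun y _ => medA y), Finset.sum_const, Finset.card_univ]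
  norm_num

lemma U_val2 (Γ : Fin 3 → FinDist (PureMeta (fun _ : Fin 10 => Fin 100)))
    (hL : ∀ x : Fin 100, (Γ 0).w (largePure x) = 1 / 100)
    (hM : ∀ y : Fin 100, (Γ 1).w (constPure y) = 1 / 100)
    (hS : ∀ z : Fin 100, (Γ 2).w (constPure z) = 1 / 100) :
    U bcu bcp Γ 2 = 0 := by
  rw [U_unif Γ hL hM hS 2]
  have h : ∀ x : Fin 100, ∑ y : Fin 100, ∑ z : Fin 100,
      payf 2 (pat x x x x (x+1) y y y y z) = 0 := by
    intro x
    exact Finset.sum_eq_zero (fun y _ => Finset.sum_eq_zero (fun z _ => pay2_zero x y z))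
  rw [Finset.sum_congr rfl (fun x _ => h x)]
  simp

lemma findist_bound {P : Type} (D : FinDist P) (f : P → ℝ) (C : ℝ)
    (h : ∀ m, f m ≤ C) : ∑ m ∈ D.support, D.w m * f m ≤ C := by
  calc ∑ m ∈ D.support, D.w m * f m ≤ ∑ m ∈ D.support, D.w m * C :=
        Finset.sum_le_sum (fun m _ => mul_le_mul_of_nonneg_left (h m) (D.nonneg m))
    _ = C := by rw [← Finset.sum_mul, D.sum_one, one_mul]

lemma swap_wsum {P : Type} (s : Finset P) (w : P → ℝ) (c : ℝ) (F : Fin 100 → P → ℝ) :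
    (∑ x : Fin 100, c * ∑ m ∈ s, w m * F x m)
    = ∑ m ∈ s, w m * ∑ x : Fin 100, c * F x m := by
  simp only [Finset.mul_sum]
  rw [Finset.sum_comm]
  apply Finset.sum_congr rfl; intro m _
  apply Finset.sum_congr rfl; intro x _
  ring

lemma pull2 (c : ℝ) (F : Fin 100 → Fin 100 → ℝ) :
    (∑ x : Fin 100, c * (∑ z : Fin 100, c * F x z))
    = c^2 * ∑ x : Fin 100, ∑ z : Fin 100, F x z := by
  simp only [Finset.mul_sum]
  apply Finset.sum_congr rfl; intro x _
  apply Finset.sum_congr rfl; intro z _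
  ring

lemma dev0 (Γ : Fin 3 → FinDist (PureMeta (fun _ : Fin 10 => Fin 100)))
    (hM : ∀ y : Fin 100, (Γ 1).w (constPure y) = 1 / 100)
    (hS : ∀ z : Fin 100, (Γ 2).w (constPure z) = 1 / 100)
    (Γ' : FinDist (PureMeta (fun _ : Fin 10 => Fin 100))) :
    U bcu bcp (Function.update Γ 0 Γ') 0 ≤ 49.99 := by
  have e0 : Function.update Γ 0 Γ' 0 = Γ' := Function.update_self _ _ _
  have e1 : Function.update Γ 0 Γ' 1 = Γ 1 := Function.update_of_ne (by decide) _ _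
  have e2 : Function.update Γ 0 Γ' 2 = Γ 2 := Function.update_of_ne (by decide) _ _
  rw [U_eq, e0, e1, e2]
  apply findist_bound
  intro m
  rw [FinDist.sum_uniform (Γ 1) constPure constPure_inj hM]
  have h1 : ∀ y : Fin 100,
      (∑ c ∈ (Γ 2).support, (Γ 2).w c * Upure bcu bcp 0 ![m, constPure y, c])
      = ∑ z : Fin 100, (1/100 : ℝ) *
          expPay (payf 0) (hybL y z (m 0) (m 1) (m 2) (m 3) (m 4)) := by
    intro y
    rw [FinDist.sum_uniform (Γ 2) constPure constPure_inj hS]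
    apply Finset.sum_congr rfl; intro z _
    rw [Upure_eq, profL]
  rw [Finset.sum_congr rfl (fun y _ => by rw [h1 y]), pull2]
  have hb := keyL (m 0) (m 1) (m 2) (m 3) (m 4)
  calc (1/100 : ℝ)^2 * (∑ y : Fin 100, ∑ z : Fin 100,
        expPay (payf 0) (hybL y z (m 0) (m 1) (m 2) (m 3) (m 4)))
      ≤ (1/100 : ℝ)^2 * 499900 := mul_le_mul_of_nonneg_left hb (by norm_num)
    _ = 49.99 := by norm_num

lemma dev1 (Γ : Fin 3 → FinDist (PureMeta (fun _ : Fin 10 => Fin 100)))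
    (hL : ∀ x : Fin 100, (Γ 0).w (largePure x) = 1 / 100)
    (hS : ∀ z : Fin 100, (Γ 2).w (constPure z) = 1 / 100)
    (Γ' : FinDist (PureMeta (fun _ : Fin 10 => Fin 100))) :
    U bcu bcp (Function.update Γ 1 Γ') 1 ≤ 49 := by
  have e0 : Function.update Γ 1 Γ' 0 = Γ 0 := Function.update_of_ne (by decide) _ _
  have e1 : Function.update Γ 1 Γ' 1 = Γ' := Function.update_self _ _ _
  have e2 : Function.update Γ 1 Γ' 2 = Γ 2 := Function.update_of_ne (by decide) _ _
  rw [U_eq, e0, e1, e2]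
  rw [FinDist.sum_uniform (Γ 0) largePure largePure_inj hL]
  rw [swap_wsum]
  apply findist_bound
  intro m
  have h1 : ∀ x : Fin 100,
      (∑ c ∈ (Γ 2).support, (Γ 2).w c * Upure bcu bcp 1 ![largePure x, m, c])
      = ∑ z : Fin 100, (1/100 : ℝ) *
          expPay (payf 1) (hybM x z (m 5) (m 6) (m 7) (m 8)) := by
    intro x
    rw [FinDist.sum_uniform (Γ 2) constPure constPure_inj hS]
    apply Finset.sum_congr rfl; intro z _
    rw [Upure_eq, profM]
  rw [Finset.sum_congr rfl (fun x _ => by rw [h1 x]), pull2]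
  have hb := keyM (m 5) (m 6) (m 7) (m 8)
  calc (1/100 : ℝ)^2 * (∑ x : Fin 100, ∑ z : Fin 100,
        expPay (payf 1) (hybM x z (m 5) (m 6) (m 7) (m 8)))
      ≤ (1/100 : ℝ)^2 * 490000 := mul_le_mul_of_nonneg_left hb (by norm_num)
    _ = 49 := by norm_num

lemma dev2 (Γ : Fin 3 → FinDist (PureMeta (fun _ : Fin 10 => Fin 100)))
    (hL : ∀ x : Fin 100, (Γ 0).w (largePure x) = 1 / 100)
    (hM : ∀ y : Fin 100, (Γ 1).w (constPure y) = 1 / 100)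
    (Γ' : FinDist (PureMeta (fun _ : Fin 10 => Fin 100))) :
    U bcu bcp (Function.update Γ 2 Γ') 2 ≤ 0 := by
  have e0 : Function.update Γ 2 Γ' 0 = Γ 0 := Function.update_of_ne (by decide) _ _
  have e1 : Function.update Γ 2 Γ' 1 = Γ 1 := Function.update_of_ne (by decide) _ _
  have e2 : Function.update Γ 2 Γ' 2 = Γ' := Function.update_self _ _ _
  rw [U_eq, e0, e1, e2]
  rw [FinDist.sum_uniform (Γ 0) largePure largePure_inj hL]
  have h1 : ∀ x : Fin 100,
      (∑ b ∈ (Γ 1).support, (Γ 1).w b * (∑ c ∈ Γ'.support, Γ'.w c *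
        Upure bcu bcp 2 ![largePure x, b, c]))
      = ∑ m ∈ Γ'.support, Γ'.w m * (∑ y : Fin 100, (1/100 : ℝ) *
          expPay (payf 2) (hybS x y (m 9))) := by
    intro x
    rw [FinDist.sum_uniform (Γ 1) constPure constPure_inj hM]
    have h2 : ∀ y : Fin 100,
        (∑ c ∈ Γ'.support, Γ'.w c * Upure bcu bcp 2 ![largePure x, constPure y, c])
        = ∑ c ∈ Γ'.support, Γ'.w c * expPay (payf 2) (hybS x y (c 9)) := by
      intro y
      apply Finset.sum_congr rfl; intro c _
      rw [Upure_eq, profS]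
    rw [Finset.sum_congr rfl (fun y _ => by rw [h2 y]), swap_wsum]
  rw [Finset.sum_congr rfl (fun x _ => by rw [h1 x]), swap_wsum]
  apply findist_bound
  intro m
  rw [pull2]
  have hb := keyS (m 9)
  calc (1/100 : ℝ)^2 * (∑ x : Fin 100, ∑ y : Fin 100, expPay (payf 2) (hybS x y (m 9)))
      ≤ (1/100 : ℝ)^2 * 0 := mul_le_mul_of_nonneg_left hb (by norm_num)
    _ = 0 := by norm_num

lemma denom0 : (∑ i : Fin 10, bcp i 0) = 5 := by
  rw [sum_univ_ten]
  norm_num [bcp, show ((0:Fin 10):ℕ) = 0 from rfl, show ((1:Fin 10):ℕ) = 1 from rfl,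
    show ((2:Fin 10):ℕ) = 2 from rfl, show ((3:Fin 10):ℕ) = 3 from rfl,
    show ((4:Fin 10):ℕ) = 4 from rfl, show ((5:Fin 10):ℕ) = 5 from rfl,
    show ((6:Fin 10):ℕ) = 6 from rfl, show ((7:Fin 10):ℕ) = 7 from rfl,
    show ((8:Fin 10):ℕ) = 8 from rfl, show ((9:Fin 10):ℕ) = 9 from rfl]

lemma denom1 : (∑ i : Fin 10, bcp i 1) = 4 := by
  rw [sum_univ_ten]
  norm_num [bcp, (by decide : ¬ ((1:Fin 3) = 0)),
    show ((0:Fin 10):ℕ) = 0 from rfl, show ((1:Fin 10):ℕ) = 1 from rfl,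
    show ((2:Fin 10):ℕ) = 2 from rfl, show ((3:Fin 10):ℕ) = 3 from rfl,
    show ((4:Fin 10):ℕ) = 4 from rfl, show ((5:Fin 10):ℕ) = 5 from rfl,
    show ((6:Fin 10):ℕ) = 6 from rfl, show ((7:Fin 10):ℕ) = 7 from rfl,
    show ((8:Fin 10):ℕ) = 8 from rfl, show ((9:Fin 10):ℕ) = 9 from rfl]

lemma denom2 : (∑ i : Fin 10, bcp i 2) = 1 := by
  rw [sum_univ_ten]
  norm_num [bcp, (by decide : ¬ ((2:Fin 3) = 0)), (by decide : ¬ ((2:Fin 3) = 1)),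
    show ((0:Fin 10):ℕ) = 0 from rfl, show ((1:Fin 10):ℕ) = 1 from rfl,
    show ((2:Fin 10):ℕ) = 2 from rfl, show ((3:Fin 10):ℕ) = 3 from rfl,
    show ((4:Fin 10):ℕ) = 4 from rfl, show ((5:Fin 10):ℕ) = 5 from rfl,
    show ((6:Fin 10):ℕ) = 6 from rfl, show ((7:Fin 10):ℕ) = 7 from rfl,
    show ((8:Fin 10):ℕ) = 8 from rfl, show ((9:Fin 10):ℕ) = 9 from rfl]

theorem bc_medium_llm_best'
    (Γ : Fin 3 → FinDist (PureMeta (fun _ : Fin 10 => Fin 100)))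
    (hL : ∀ x : Fin 100, (Γ 0).w (largePure x) = 1 / 100)
    (hM : ∀ y : Fin 100, (Γ 1).w (constPure y) = 1 / 100)
    (hS : ∀ z : Fin 100, (Γ 2).w (constPure z) = 1 / 100) :
    Nash bcu bcp Γ ∧
    avgU bcu bcp Γ 0 = 9.998 ∧
    avgU bcu bcp Γ 1 = 12.25 ∧
    avgU bcu bcp Γ 2 = 0 ∧
    avgU bcu bcp Γ 0 < avgU bcu bcp Γ 1 ∧
    avgU bcu bcp Γ 2 < avgU bcu bcp Γ 1 := by
  have u0 := U_val0 Γ hL hM hS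
  have u1 := U_val1 Γ hL hM hS
  have u2 := U_val2 Γ hL hM hS
  have a0 : avgU bcu bcp Γ 0 = 9.998 := by
    rw [avgU, u0, denom0]; norm_num
  have a1 : avgU bcu bcp Γ 1 = 12.25 := by
    rw [avgU, u1, denom1]; norm_num
  have a2 : avgU bcu bcp Γ 2 = 0 := by
    rw [avgU, u2, denom2]; norm_num
  refine ⟨?_, a0, a1, a2, ?_, ?_⟩
  · intro j Γ'
    fin_cases j
    · show U bcu bcp (Function.update Γ 0 Γ') 0 ≤ U bcu bcp Γ 0
      rw [u0]; exact dev0 Γ hM hS Γ'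
    · show U bcu bcp (Function.update Γ 1 Γ') 1 ≤ U bcu bcp Γ 1
      rw [u1]; exact dev1 Γ hL hS Γ'
    · show U bcu bcp (Function.update Γ 2 Γ') 2 ≤ U bcu bcp Γ 2
      rw [u2]; exact dev2 Γ hL hM Γ'
  · rw [a0, a1]; norm_num
  · rw [a2, a1]; norm_num

/-- In the bounded-coordination meta-game, the profile in which the large LLM mixes uniformly
over `largePure x`, the medium LLM uniformly over `constPure y` and the small LLM uniformly over
`constPure z` is a Nash equilibrium whose average utilities are `9.998`, `12.25` and `0`; in
particular the medium LLM obtains the highest average utility despite not having the largest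
market share. -/
theorem bc_medium_llm_best
    (Γ : Fin 3 → FinDist (PureMeta (fun _ : Fin 10 => Fin 100)))
    (hL : ∀ x : Fin 100, (Γ 0).w (largePure x) = 1 / 100)
    (hM : ∀ y : Fin 100, (Γ 1).w (constPure y) = 1 / 100)
    (hS : ∀ z : Fin 100, (Γ 2).w (constPure z) = 1 / 100) :
    Nash bcu bcp Γ ∧
    avgU bcu bcp Γ 0 = 9.998 ∧
    avgU bcu bcp Γ 1 = 12.25 ∧
    avgU bcu bcp Γ 2 = 0 ∧
    avgU bcu bcp Γ 0 < avgU bcu bcp Γ 1 ∧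
    avgU bcu bcp Γ 2 < avgU bcu bcp Γ 1 := by
  exact bc_medium_llm_best' Γ hL hM hS

end MetaGame
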